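/- arXiv:1201.6584 — 6 statements merged into one kernel-verified Lean document; each statement's English description precedes it below -/
import Mathlib

section
/- Let X and Y be real vector spaces and T : X → Y a surjective linear map. If A ⊆ X is a polyhedron, then the image T(A) is a polyhedron in Y. -/
/-- A subset `P` of a real vector space `X` is a polyhedron if there exist a positive
integer `n`, linear functionals `f₁,…,fₙ` on `X`, and reals `λ₁,…,λₙ` such that
`P = {x : fₖ x ≤ λₖ for all k}`. -/
def IsPolyhedron {X : Type*} [AddCommGroup X] [Module ℝ X] (P : Set X) : Prop :=
  ∃ n : ℕ, 0 < n ∧ ∃ (f : Fin n → X →ₗ[ℝ] ℝ) (lam : Fin n → ℝ),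
    P = {x : X | ∀ k, f k x ≤ lam k}


lemma fm_one {ι : Type} [Fintype ι] (a b : ι → ℝ) :
    (∃ s : ℝ, ∀ k, a k * s ≤ b k) ↔
      ((∀ k, a k = 0 → 0 ≤ b k) ∧
        ∀ i j, 0 < a i → a j < 0 → a j * b i - a i * b j ≤ 0) := by
  constructor
  · rintro ⟨s, hs⟩
    refine ⟨fun k hk => by have := hs k; rw [hk] at this; linarith, fun i j hi hj => ?_⟩
    have h1 := hs i
    have h2 := hs j
    nlinarith [mul_le_mul_of_nonpos_left h1 hj.le, mul_le_mul_of_nonneg_left h2 hi.le]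
  · rintro ⟨h0, hp⟩
    by_cases hP : ∃ i, 0 < a i
    · obtain ⟨i₀, hi₀⟩ := hP
      -- take the minimum of b i / a i over positive coefficients
      obtain ⟨imin, himinmem, himinmin⟩ := Finset.exists_min_image
        (Finset.univ.filter fun k => 0 < a k) (fun k => b k / a k)
        ⟨i₀, by simp [hi₀]⟩
      have haimin : 0 < a imin := by simpa using himinmem
      refine ⟨b imin / a imin, fun k => ?_⟩
      rcases lt_trichotomy (a k) 0 with hk | hk | hk
      · -- negative coefficient: use pair condition
        have h2 := hp imin k haimin hk
        rw [mul_comm, div_mul_eq_mul_div, div_le_iff₀ haimin]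
        linarith
      · simpa [hk] using h0 k hk
      · have hle : b imin / a imin ≤ b k / a k := himinmin k (by simp [hk])
        rw [mul_comm, ← le_div_iff₀ hk]
        exact hle
    · push_neg at hP
      by_cases hN : ∃ j, a j < 0
      · obtain ⟨j₀, hj₀⟩ := hN
        obtain ⟨jmax, hjmaxmem, hjmaxmax⟩ := Finset.exists_max_image
          (Finset.univ.filter fun k => a k < 0) (fun k => b k / a k)
          ⟨j₀, by simp [hj₀]⟩
        have hajmax : a jmax < 0 := by simpa using hjmaxmem
        refine ⟨b jmax / a jmax, fun k => ?_⟩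
        rcases lt_trichotomy (a k) 0 with hk | hk | hk
        · have hle : b k / a k ≤ b jmax / a jmax := hjmaxmax k (by simp [hk])
          rw [mul_comm, ← div_le_iff_of_neg hk]
          exact hle
        · simpa [hk] using h0 k hk
        · exact absurd hk (not_lt.2 (hP k))
      · push_neg at hN
        refine ⟨0, fun k => ?_⟩
        have : a k = 0 := le_antisymm (hP k) (hN k)
        simpa [this] using h0 k this

lemma isPolyhedron_of_fintype {X : Type*} [AddCommGroup X] [Module ℝ X]
    (ι : Type) [Fintype ι] (f : ι → X →ₗ[ℝ] ℝ) (μ : ι → ℝ) :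
    IsPolyhedron {x : X | ∀ k, f k x ≤ μ k} := by
  cases isEmpty_or_nonempty ι with
  | inl h =>
    refine ⟨1, one_pos, fun _ => 0, fun _ => 0, ?_⟩
    ext x
    simp
  | inr h =>
    have : 0 < Fintype.card ι := Fintype.card_pos
    refine ⟨Fintype.card ι, this, fun j => f ((Fintype.equivFin ι).symm j),
      fun j => μ ((Fintype.equivFin ι).symm j), ?_⟩
    ext x
    constructor
    · intro hx j; exact hx _
    · intro hx k
      have := hx (Fintype.equivFin ι k)
      simpa using this

lemma fm_elim {Y : Type*} [AddCommGroup Y] [Module ℝ Y] :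
    ∀ (m : ℕ) (ι : Type) (_ : Fintype ι) (h : ι → Y →ₗ[ℝ] ℝ) (μ : ι → ℝ)
      (c : Fin m → ι → ℝ),
      IsPolyhedron {y : Y | ∃ t : Fin m → ℝ, ∀ k, h k y + ∑ i, t i * c i k ≤ μ k} := by
  intro m
  induction m with
  | zero =>
    intro ι _ h μ c
    have : {y : Y | ∃ t : Fin 0 → ℝ, ∀ k, h k y + ∑ i, t i * c i k ≤ μ k}
        = {y : Y | ∀ k, h k y ≤ μ k} := by
      ext y; simp
    rw [this]
    exact isPolyhedron_of_fintype ι h μ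
  | succ m ih =>
    intro ι _ h μ c
    set a : ι → ℝ := c 0 with ha
    -- new system on index ι ⊕ ι × ι
    set h' : ι ⊕ ι × ι → Y →ₗ[ℝ] ℝ := fun k' =>
      match k' with
      | .inl k => if a k = 0 then h k else 0
      | .inr (i, j) => if 0 < a i ∧ a j < 0 then a i • h j - a j • h i else 0
      with hh'
    set μ' : ι ⊕ ι × ι → ℝ := fun k' =>
      match k' with
      | .inl k => if a k = 0 then μ k else 0
      | .inr (i, j) => if 0 < a i ∧ a j < 0 then a i * μ j - a j * μ i else 0
      with hμ'
    set c' : Fin m → ι ⊕ ι × ι → ℝ := fun l k' =>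
      match k' with
      | .inl k => if a k = 0 then c l.succ k else 0
      | .inr (i, j) => if 0 < a i ∧ a j < 0
          then a i * c l.succ j - a j * c l.succ i else 0
      with hc'
    have key : {y : Y | ∃ t : Fin (m + 1) → ℝ, ∀ k, h k y + ∑ i, t i * c i k ≤ μ k}
        = {y : Y | ∃ t : Fin m → ℝ, ∀ k', h' k' y + ∑ l, t l * c' l k' ≤ μ' k'} := by
      ext y
      simp only [Set.mem_setOf_eq]
      constructor
      · rintro ⟨t, ht⟩
        refine ⟨Fin.tail t, ?_⟩
        -- use the forward direction of fm_one
        have hfm := (fm_one a (fun k => μ k - h k y - ∑ l, Fin.tail t l * c l.succ k)).mp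
          ⟨t 0, fun k => by
            have := ht k
            rw [Fin.sum_univ_succ] at this
            simp only [Fin.tail]
            linarith⟩
        rintro (k | ⟨i, j⟩)
        · by_cases hk : a k = 0
          · have := hfm.1 k hk
            simp only [hh', hμ', hc', hk, if_true]
            linarith
          · simp [hh', hμ', hc', hk]
        · by_cases hij : 0 < a i ∧ a j < 0
          · have := hfm.2 i j hij.1 hij.2
            simp only [hh', hμ', hc', hij.1, hij.2, and_self, if_true, LinearMap.sub_apply,
              LinearMap.smul_apply, smul_eq_mul]
            have hsum : ∑ l, Fin.tail t l * (a i * c l.succ j - a j * c l.succ i)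
                = a i * ∑ l, Fin.tail t l * c l.succ j
                  - a j * ∑ l, Fin.tail t l * c l.succ i := by
              rw [Finset.mul_sum, Finset.mul_sum, ← Finset.sum_sub_distrib]
              congr 1; ext l; ring
            rw [hsum]
            nlinarith [hij.1, hij.2]
          · simp [hh', hμ', hc', hij]
      · rintro ⟨t, ht⟩
        have hfm := (fm_one a (fun k => μ k - h k y - ∑ l, t l * c l.succ k)).mpr ?_
        · obtain ⟨s, hs⟩ := hfm
          refine ⟨Fin.cons s t, fun k => ?_⟩
          have := hs k
          rw [Fin.sum_univ_succ]
          simp only [Fin.cons_zero, Fin.cons_succ]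
          linarith
        · constructor
          · intro k hk
            have := ht (.inl k)
            simp only [hh', hμ', hc', hk, if_true] at this
            linarith
          · intro i j hi hj
            have := ht (.inr (i, j))
            have hij : 0 < a i ∧ a j < 0 := ⟨hi, hj⟩
            simp only [hh', hμ', hc', hij.1, hij.2, and_self, if_true, LinearMap.sub_apply,
              LinearMap.smul_apply, smul_eq_mul] at this
            have hsum : ∑ l, t l * (a i * c l.succ j - a j * c l.succ i)
                = a i * ∑ l, t l * c l.succ j - a j * ∑ l, t l * c l.succ i := by
              rw [Finset.mul_sum, Finset.mul_sum, ← Finset.sum_sub_distrib]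
              congr 1; ext l; ring
            rw [hsum] at this
            nlinarith
    rw [key]
    exact ih (ι ⊕ ι × ι) inferInstance h' μ' c'

set_option synthInstance.maxHeartbeats 1000000 in
set_option maxHeartbeats 1000000 in
theorem image_of_polyhedron_isPolyhedron
    {X Y : Type*} [AddCommGroup X] [Module ℝ X] [AddCommGroup Y] [Module ℝ Y]
    (T : X →ₗ[ℝ] Y) (hT : Function.Surjective T)
    (A : Set X) (hA : IsPolyhedron A) :
    IsPolyhedron (T '' A) := by
  obtain ⟨n, hn, f, lam, rfl⟩ := hA
  -- a linear right inverse of T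
  obtain ⟨S, hS⟩ := T.exists_rightInverse_of_surjective (LinearMap.range_eq_top.2 hT)
  have hTS : ∀ y, T (S y) = y := fun y => congrArg (· y) hS
  -- the relevant finite-dimensional space of constraint values on ker T
  set Φ : X →ₗ[ℝ] (Fin n → ℝ) := LinearMap.pi f with hΦ
  set V : Submodule ℝ (Fin n → ℝ) := (LinearMap.ker T).map Φ with hV
  obtain b := Module.finBasis ℝ V
  set m := Module.finrank ℝ V
  -- choose preimages in ker T of the basis vectors
  have hbz : ∀ i : Fin m, ∃ z : X, z ∈ LinearMap.ker T ∧ Φ z = (b i : Fin n → ℝ) := by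
    intro i
    have : (b i : Fin n → ℝ) ∈ V := (b i).2
    exact Submodule.mem_map.mp this
  choose z hzker hzb using hbz
  have key : T '' {x : X | ∀ k, f k x ≤ lam k}
      = {y : Y | ∃ t : Fin m → ℝ, ∀ k, (f k).comp S y + ∑ i, t i * Φ (z i) k ≤ lam k} := by
    ext y
    constructor
    · rintro ⟨x, hx, rfl⟩
      have hker : x - S (T x) ∈ LinearMap.ker T := by
        simp [LinearMap.mem_ker, map_sub, hTS]
      have hmem : Φ (x - S (T x)) ∈ V := Submodule.mem_map_of_mem hker
      set w : V := ⟨Φ (x - S (T x)), hmem⟩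
      refine ⟨fun i => b.repr w i, fun k => ?_⟩
      have hwk : Φ (x - S (T x)) k = ∑ i, b.repr w i * Φ (z i) k := by
        have h1 := congrArg (fun v : V => (v : Fin n → ℝ) k) (b.sum_repr w)
        simp only [AddSubmonoidClass.coe_finset_sum, SetLike.val_smul, Finset.sum_apply,
          Pi.smul_apply, smul_eq_mul] at h1
        simp only [hzb]
        exact h1.symm
      have hΦx : Φ (x - S (T x)) k = f k x - f k (S (T x)) := by
        simp [hΦ, LinearMap.pi_apply, map_sub]
      have := hx k
      simp only [LinearMap.comp_apply]
      rw [← hwk.symm] at *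
      rw [hΦx] at hwk
      have : f k (S (T x)) + ∑ i, b.repr w i * Φ (z i) k = f k x := by linarith
      linarith [hx k]
    · rintro ⟨t, ht⟩
      refine ⟨S y + ∑ i, t i • z i, fun k => ?_, ?_⟩
      · have hsum : f k (∑ i, t i • z i) = ∑ i, t i * Φ (z i) k := by
          rw [map_sum]
          congr 1; ext i
          simp [hΦ, LinearMap.pi_apply]
        have := ht k
        simp only [LinearMap.comp_apply] at this
        simp only [map_add, hsum]
        linarith
      · have : T (∑ i, t i • z i) = 0 := by
          rw [map_sum]
          apply Finset.sum_eq_zero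
          intro i _
          have := hzker i
          simp only [LinearMap.mem_ker] at this
          simp [this]
        simp [map_add, hTS, this]
  rw [key]
  exact fm_elim m (Fin n) inferInstance (fun k => (f k).comp S) lam (fun i k => Φ (z i) k)
end

section
/- Let X and Y be real vector spaces and T : X → Y a surjective linear map. If A ⊆ X is a polyhedral cone, then the image T(A) is a polyhedral cone in Y. -/
/-- A subset `P` of a real vector space `X` is a polyhedral cone if there exist a positive
integer `n` and linear functionals `f₁,…,fₙ` on `X` such that
`P = {x : fₖ x ≤ 0 for all k}`. -/
def IsPolyhedralCone {X : Type*} [AddCommGroup X] [Module ℝ X] (P : Set X) : Prop :=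
  ∃ n : ℕ, 0 < n ∧ ∃ f : Fin n → X →ₗ[ℝ] ℝ,
    P = {x : X | ∀ k, f k x ≤ 0}

lemma isPolyhedralCone_of_fintype {X : Type*} [AddCommGroup X] [Module ℝ X]
    (ι : Type*) [Fintype ι] (f : ι → X →ₗ[ℝ] ℝ) :
    IsPolyhedralCone {x : X | ∀ k, f k x ≤ 0} := by
  classical
  refine ⟨Fintype.card (Option ι), Fintype.card_pos, ?_⟩
  set e := (Fintype.equivFin (Option ι)).symm with he
  refine ⟨fun k => (e k).elim 0 f, ?_⟩
  ext x
  simp only [Set.mem_setOf_eq]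
  constructor
  · intro h k
    cases h' : e k with
    | none => simp [h']
    | some i => simpa using h i
  · intro h i
    have := h (e.symm (some i))
    simpa using this

lemma isPolyhedralCone_preimage {X Y : Type*} [AddCommGroup X] [Module ℝ X]
    [AddCommGroup Y] [Module ℝ Y] (s : Y →ₗ[ℝ] X) (P : Set X)
    (hP : IsPolyhedralCone P) : IsPolyhedralCone (s ⁻¹' P) := by
  obtain ⟨n, hn, f, rfl⟩ := hP
  exact ⟨n, hn, fun k => (f k).comp s, rfl⟩

lemma isPolyhedralCone_fm {X : Type*} [AddCommGroup X] [Module ℝ X]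
    (P : Set X) (hP : IsPolyhedralCone P) (c : X) :
    IsPolyhedralCone {x : X | ∃ t : ℝ, x + t • c ∈ P} := by
  classical
  obtain ⟨n, -, f, rfl⟩ := hP
  set ι := {k : Fin n // f k c = 0} ⊕
    ({i : Fin n // 0 < f i c} × {j : Fin n // f j c < 0}) with hι
  set g : ι → X →ₗ[ℝ] ℝ := Sum.elim (fun k => f k.1)
    (fun p => f p.1.1 c • f p.2.1 - f p.2.1 c • f p.1.1) with hg
  have key : {x : X | ∃ t : ℝ, x + t • c ∈ {x : X | ∀ k, f k x ≤ 0}}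
      = {x : X | ∀ k, g k x ≤ 0} := by
    ext x
    simp only [Set.mem_setOf_eq]
    constructor
    · rintro ⟨t, ht⟩ k
      rcases k with ⟨k, hk⟩ | ⟨⟨i, hi⟩, ⟨j, hj⟩⟩
      · have := ht k
        simp only [map_add, map_smul, smul_eq_mul, hk, mul_zero, add_zero] at this
        simpa [hg] using this
      · have h1 := ht i
        have h2 := ht j
        simp only [map_add, map_smul, smul_eq_mul] at h1 h2
        simp only [hg, Sum.elim_inr, LinearMap.sub_apply, LinearMap.smul_apply,
          smul_eq_mul]
        nlinarith [h1, h2, hi, hj]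
    · intro h
      -- choose t using Fourier–Motzkin
      set S : Finset (Fin n) := Finset.univ.filter (fun j => f j c < 0) with hS
      set U : Finset (Fin n) := Finset.univ.filter (fun i => 0 < f i c) with hU
      by_cases hSne : S.Nonempty
      · refine ⟨S.sup' hSne (fun j => f j x / (-(f j c))), ?_⟩
        intro k
        simp only [map_add, map_smul, smul_eq_mul]
        rcases lt_trichotomy (f k c) 0 with hk | hk | hk
        · -- lower bound satisfied since k ∈ S
          have hkS : k ∈ S := by simp [hS, hk]
          have hle : f k x / (-(f k c)) ≤ S.sup' hSne (fun j => f j x / (-(f j c))) :=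
            Finset.le_sup' (fun j => f j x / (-(f j c))) hkS
          have hpos : (0:ℝ) < -(f k c) := by linarith
          rw [div_le_iff₀ hpos] at hle
          nlinarith
        · simp only [hk, mul_zero, add_zero]
          exact h (Sum.inl ⟨k, hk⟩)
        · -- upper bound: sup' ≤ -(f k x) / f k c
          have hle : S.sup' hSne (fun j => f j x / (-(f j c))) ≤ -(f k x) / f k c := by
            apply Finset.sup'_le
            intro j hj
            have hj' : f j c < 0 := by simpa [hS] using hj
            have hg' := h (Sum.inr ⟨⟨k, hk⟩, ⟨j, hj'⟩⟩)
            simp only [hg, Sum.elim_inr, LinearMap.sub_apply, LinearMap.smul_apply,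
              smul_eq_mul] at hg'
            rw [div_le_div_iff₀ (by linarith) hk]
            nlinarith
          rw [le_div_iff₀ hk] at hle
          linarith
      · -- no lower bounds
        by_cases hUne : U.Nonempty
        · refine ⟨U.inf' hUne (fun i => -(f i x) / f i c), ?_⟩
          intro k
          simp only [map_add, map_smul, smul_eq_mul]
          rcases lt_trichotomy (f k c) 0 with hk | hk | hk
          · exact absurd ⟨k, by simp [hS, hk]⟩ hSne
          · simp only [hk, mul_zero, add_zero]
            exact h (Sum.inl ⟨k, hk⟩)
          · have hle : U.inf' hUne (fun i => -(f i x) / f i c) ≤ -(f k x) / f k c :=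
              Finset.inf'_le _ (by simp [hU, hk])
            rw [le_div_iff₀ hk] at hle
            linarith
        · refine ⟨0, ?_⟩
          intro k
          simp only [map_add, map_smul, smul_eq_mul, zero_mul, add_zero]
          rcases lt_trichotomy (f k c) 0 with hk | hk | hk
          · exact absurd ⟨k, by simp [hS, hk]⟩ hSne
          · exact h (Sum.inl ⟨k, hk⟩)
          · exact absurd ⟨k, by simp [hU, hk]⟩ hUne
  rw [key]
  exact isPolyhedralCone_of_fintype ι g

lemma isPolyhedralCone_fm_multi {X : Type*} [AddCommGroup X] [Module ℝ X]
    (P : Set X) (hP : IsPolyhedralCone P) :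
    ∀ (m : ℕ) (z : Fin m → X),
      IsPolyhedralCone {x : X | ∃ t : Fin m → ℝ, x + ∑ i, t i • z i ∈ P} := by
  intro m
  induction m with
  | zero =>
    intro z
    convert hP using 1
    ext x
    simp
  | succ m ih =>
    intro z
    have h1 : {x : X | ∃ t : Fin (m + 1) → ℝ, x + ∑ i, t i • z i ∈ P}
        = {x : X | ∃ s : ℝ, x + s • z (Fin.last m) ∈
            {x : X | ∃ t : Fin m → ℝ, x + ∑ i, t i • z i.castSucc ∈ P}} := by
      ext x
      simp only [Set.mem_setOf_eq]
      constructor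
      · rintro ⟨t, ht⟩
        refine ⟨t (Fin.last m), fun i => t i.castSucc, ?_⟩
        rw [Fin.sum_univ_castSucc] at ht
        have heq : x + t (Fin.last m) • z (Fin.last m) +
            ∑ i : Fin m, t i.castSucc • z i.castSucc
            = x + (∑ i : Fin m, t i.castSucc • z i.castSucc
              + t (Fin.last m) • z (Fin.last m)) := by abel
        rwa [heq]
      · rintro ⟨u, t, ht⟩
        refine ⟨Fin.snoc t u, ?_⟩
        rw [Fin.sum_univ_castSucc]
        simp only [Fin.snoc_castSucc, Fin.snoc_last]
        have heq : x + (∑ i : Fin m, t i • z i.castSucc + u • z (Fin.last m))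
            = x + u • z (Fin.last m) + ∑ i : Fin m, t i • z i.castSucc := by abel
        rwa [heq]
    rw [h1]
    exact isPolyhedralCone_fm _ (ih _) _

theorem image_of_polyhedralCone_isPolyhedralCone
    {X Y : Type*} [AddCommGroup X] [Module ℝ X] [AddCommGroup Y] [Module ℝ Y]
    (T : X →ₗ[ℝ] Y) (hT : Function.Surjective T)
    (A : Set X) (hA : IsPolyhedralCone A) :
    IsPolyhedralCone (T '' A) := by
  classical
  obtain ⟨n, hn, f, rfl⟩ := hA
  obtain ⟨s, hs⟩ := T.exists_rightInverse_of_surjective (LinearMap.range_eq_top.mpr hT)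
  have hsy : ∀ y : Y, T (s y) = y := fun y => congrArg (fun g => g y) hs
  -- the image of ker T under (f k)_k
  set Φ : X →ₗ[ℝ] (Fin n → ℝ) := LinearMap.pi f with hΦ
  set V : Submodule ℝ (Fin n → ℝ) := (LinearMap.ker T).map Φ with hV
  have hVfg : V.FG := IsNoetherian.noetherian V
  obtain ⟨m, w, hw⟩ := Submodule.fg_iff_exists_fin_generating_family.mp hVfg
  have hwV : ∀ i, w i ∈ V := fun i => hw ▸ Submodule.subset_span ⟨i, rfl⟩
  choose z hz1 hz2 using fun i => (Submodule.mem_map.mp (hwV i))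
  have key : T '' {x : X | ∀ k, f k x ≤ 0}
      = s ⁻¹' {x : X | ∃ t : Fin m → ℝ, x + ∑ i, t i • z i ∈ {x : X | ∀ k, f k x ≤ 0}} := by
    ext y
    simp only [Set.mem_image, Set.mem_preimage, Set.mem_setOf_eq]
    constructor
    · rintro ⟨x, hx, rfl⟩
      have hker : x - s (T x) ∈ LinearMap.ker T := by
        simp [LinearMap.mem_ker, map_sub, hsy]
      have hmem : Φ (x - s (T x)) ∈ V := Submodule.mem_map_of_mem hker
      rw [← hw, Finsupp.mem_span_range_iff_exists_finsupp] at hmem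
      obtain ⟨t, ht⟩ := hmem
      refine ⟨fun i => t i, fun k => ?_⟩
      have happ : ∀ (v : X), Φ v k = f k v := fun _ => rfl
      have hΦeq : (∑ i, t i * f k (z i)) = f k (x - s (T x)) := by
        have h1 := congrArg (fun v => v k) ht
        simp only [Finsupp.sum, Finset.sum_apply] at h1
        rw [← happ, ← h1]
        rw [← Finset.sum_subset (Finset.subset_univ t.support)
          (fun i _ hi => by simp [Finsupp.notMem_support_iff.mp hi])]
        refine Finset.sum_congr rfl fun i _ => ?_
        simp only [Pi.smul_apply, smul_eq_mul]
        rw [← hz2 i, happ]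
      have hfin : f k (s (T x) + ∑ i, (t i) • z i) = f k x := by
        rw [map_add, map_sum]
        simp only [map_smul, smul_eq_mul]
        rw [hΦeq, map_sub]
        ring
      rw [hfin]
      exact hx k
    · rintro ⟨t, ht⟩
      refine ⟨s y + ∑ i, t i • z i, ht, ?_⟩
      rw [map_add, hsy, map_sum]
      simp only [map_smul]
      have : ∀ i, T (z i) = 0 := fun i => hz1 i
      simp [this]
  rw [key]
  exact isPolyhedralCone_preimage s _ (isPolyhedralCone_fm_multi _ ⟨n, hn, f, rfl⟩ m z)
end

section
/- Let X and Y be real Fréchet spaces and T : X → Y a surjective continuous linear map. If A ⊆ X is a closed polyhedral cone, then the image T(A) is a closed polyhedral cone in Y. -/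
/-- A subset `P` of a real topological vector space `X` is a closed polyhedral cone if
there exist a positive integer `n` and continuous linear functionals `f₁,…,fₙ` on `X`
such that `P = {x : fₖ x ≤ 0 for all k}`. -/
def IsClosedPolyhedralCone {X : Type*} [AddCommGroup X] [Module ℝ X] [TopologicalSpace X]
    (P : Set X) : Prop :=
  ∃ n : ℕ, 0 < n ∧ ∃ f : Fin n → X →L[ℝ] ℝ,
    P = {x : X | ∀ k, f k x ≤ 0}

open Filter Set Topology Pointwise Function Uniformity

section FourierMotzkin

variable {V : Type*} [AddCommGroup V] [Module ℝ V]

/-- One step of Fourier–Motzkin elimination. -/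
lemma fm_step {ι : Type} [Fintype ι] (f : ι → V →ₗ[ℝ] ℝ) (e : V) :
    ∃ (κ : Type) (_ : Fintype κ) (g : κ → V →ₗ[ℝ] ℝ),
      (∀ j, g j e = 0) ∧
      (∀ j v, (∀ k, f k v = 0) → g j v = 0) ∧
      {x | ∃ t : ℝ, ∀ k, f k x - t * f k e ≤ 0} = {x | ∀ j, g j x ≤ 0} := by
  classical
  refine ⟨{k : ι // f k e = 0} ⊕ ({p : ι // 0 < f p e} × {q : ι // f q e < 0}), inferInstance,
    Sum.elim (fun k => f k.1)
      (fun pq => f pq.1.1 e • f pq.2.1 - f pq.2.1 e • f pq.1.1), ?_, ?_, ?_⟩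
  · rintro (⟨k, hk⟩ | ⟨⟨p, hp⟩, ⟨q, hq⟩⟩)
    · exact hk
    · simp only [Sum.elim_inr, LinearMap.sub_apply, LinearMap.smul_apply, smul_eq_mul]
      ring
  · rintro (⟨k, hk⟩ | ⟨⟨p, hp⟩, ⟨q, hq⟩⟩) v hv
    · exact hv k
    · simp only [Sum.elim_inr, LinearMap.sub_apply, LinearMap.smul_apply, smul_eq_mul, hv p, hv q]
      ring
  · ext x
    simp only [mem_setOf_eq]
    constructor
    · rintro ⟨t, ht⟩ (⟨k, hk⟩ | ⟨⟨p, hp⟩, ⟨q, hq⟩⟩)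
      · have := ht k; rw [hk] at this; simpa using this
      · simp only [Sum.elim_inr, LinearMap.sub_apply, LinearMap.smul_apply, smul_eq_mul]
        nlinarith [ht p, ht q]
    · intro hx
      by_cases hP : (Finset.univ.filter fun p : ι => 0 < f p e).Nonempty
      · set P := Finset.univ.filter fun p : ι => 0 < f p e with hPdef
        obtain ⟨p₀, hp₀mem, hp₀⟩ := Finset.exists_mem_eq_sup' hP (fun p => f p x / f p e)
        have hp₀e : 0 < f p₀ e := (Finset.mem_filter.1 hp₀mem).2
        refine ⟨P.sup' hP fun p => f p x / f p e, fun k => ?_⟩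
        rcases lt_trichotomy (f k e) 0 with hk | hk | hk
        · have hg := hx (Sum.inr (⟨p₀, hp₀e⟩, ⟨k, hk⟩))
          simp only [Sum.elim_inr, LinearMap.sub_apply, LinearMap.smul_apply, smul_eq_mul] at hg
          rw [hp₀, sub_nonpos, div_mul_eq_mul_div, le_div_iff₀ hp₀e]
          nlinarith
        · have := hx (Sum.inl ⟨k, hk⟩)
          simp only [Sum.elim_inl] at this
          rw [hk, mul_zero, sub_zero]; exact this
        · have hkP : k ∈ P := Finset.mem_filter.2 ⟨Finset.mem_univ _, hk⟩
          have hle := Finset.le_sup' (fun p => f p x / f p e) hkP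
          rw [sub_nonpos]
          calc f k x = (f k x / f k e) * f k e := (div_mul_cancel₀ _ hk.ne').symm
          _ ≤ (P.sup' hP fun p => f p x / f p e) * f k e :=
              mul_le_mul_of_nonneg_right hle hk.le
      · by_cases hN : (Finset.univ.filter fun q : ι => f q e < 0).Nonempty
        · set N := Finset.univ.filter fun q : ι => f q e < 0 with hNdef
          refine ⟨N.inf' hN fun q => f q x / f q e, fun k => ?_⟩
          rcases lt_trichotomy (f k e) 0 with hk | hk | hk
          · have hkN : k ∈ N := Finset.mem_filter.2 ⟨Finset.mem_univ _, hk⟩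
            have hle := Finset.inf'_le (fun q => f q x / f q e) hkN
            rw [sub_nonpos]
            calc f k x = (f k x / f k e) * f k e := (div_mul_cancel₀ _ hk.ne).symm
            _ ≤ (N.inf' hN fun q => f q x / f q e) * f k e :=
                mul_le_mul_of_nonpos_right hle hk.le
          · have := hx (Sum.inl ⟨k, hk⟩)
            simp only [Sum.elim_inl] at this
            rw [hk, mul_zero, sub_zero]; exact this
          · exact absurd ⟨k, Finset.mem_filter.2 ⟨Finset.mem_univ _, hk⟩⟩ hP
        · refine ⟨0, fun k => ?_⟩
          have hk : f k e = 0 := by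
            by_contra h
            rcases lt_or_gt_of_ne h with h' | h'
            · exact hN ⟨k, Finset.mem_filter.2 ⟨Finset.mem_univ _, h'⟩⟩
            · exact hP ⟨k, Finset.mem_filter.2 ⟨Finset.mem_univ _, h'⟩⟩
          have := hx (Sum.inl ⟨k, hk⟩)
          simp only [Sum.elim_inl] at this
          rw [zero_mul, sub_zero]; exact this

/-- Fourier–Motzkin elimination of the span of a finite set. -/
lemma fm_finset {ι : Type} [Fintype ι] (f : ι → V →ₗ[ℝ] ℝ) (s : Finset V) :
    ∃ (κ : Type) (_ : Fintype κ) (g : κ → V →ₗ[ℝ] ℝ),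
      (∀ j, ∀ v ∈ s, g j v = 0) ∧
      {x | ∃ c ∈ Submodule.span ℝ (s : Set V), ∀ k, f k (x - c) ≤ 0}
        = {x | ∀ j, g j x ≤ 0} := by
  classical
  induction s using Finset.induction_on with
  | empty =>
      refine ⟨ι, inferInstance, f, by simp, ?_⟩
      ext x
      simp [Submodule.span_empty]
  | @insert a s ha ih =>
      obtain ⟨κ, _, g, hg0, hgset⟩ := ih
      obtain ⟨κ', _, g', hg'e, hg'comb, hg'set⟩ := fm_step g a
      refine ⟨κ', ‹_›, g', ?_, ?_⟩
      · intro j v hv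
        rcases Finset.mem_insert.1 hv with rfl | hv
        · exact hg'e j
        · exact hg'comb j v fun k => hg0 k v hv
      · ext x
        simp only [mem_setOf_eq]
        have key : ∀ z t, g t (z - (fun r => r • a) 0) = 0 → True := fun _ _ _ => trivial
        constructor
        · rintro ⟨c, hc, hxc⟩
          rw [Finset.coe_insert, Submodule.mem_span_insert] at hc
          obtain ⟨t, z, hz, rfl⟩ := hc
          have hmem : ∀ j, g j (x - t • a) ≤ 0 := by
            refine (Set.ext_iff.mp hgset (x - t • a)).1 ⟨z, hz, fun k => ?_⟩
            have := hxc k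
            rwa [show x - (t • a + z) = x - t • a - z by abel] at this
          refine (Set.ext_iff.mp hg'set x).1 ⟨t, fun k => ?_⟩
          have h1 : g k (x - t • a) = g k x - t * g k a := by
            rw [map_sub, map_smul, smul_eq_mul]
          have := hmem k
          linarith [h1 ▸ this]
        · intro hx
          obtain ⟨t, ht⟩ := (Set.ext_iff.mp hg'set x).2 hx
          have hmem : x - t • a ∈ {x | ∀ j, g j x ≤ 0} := fun k => by
            have h1 : g k (x - t • a) = g k x - t * g k a := by
              rw [map_sub, map_smul, smul_eq_mul]
            have := ht k
            linarith [h1]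
          obtain ⟨c, hc, hxc⟩ := (Set.ext_iff.mp hgset (x - t • a)).2 hmem
          refine ⟨t • a + c, ?_, fun k => ?_⟩
          · rw [Finset.coe_insert, Submodule.mem_span_insert]
            exact ⟨t, c, hc, rfl⟩
          · have := hxc k
            rwa [show x - t • a - c = x - (t • a + c) by abel] at this

end FourierMotzkin

section OMT

variable {X Y : Type*}
    [AddCommGroup X] [Module ℝ X] [UniformSpace X] [IsUniformAddGroup X]
    [ContinuousSMul ℝ X] [CompleteSpace X] [TopologicalSpace.MetrizableSpace X]
    [AddCommGroup Y] [Module ℝ Y] [UniformSpace Y] [IsUniformAddGroup Y]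
    [ContinuousSMul ℝ Y] [CompleteSpace Y] [TopologicalSpace.MetrizableSpace Y]

/-- Baire category step: the closure of the image of a neighborhood of zero has
nonempty interior. -/
lemma dense_image (T : X →L[ℝ] Y) (hT : Surjective T) {V : Set X} (hV : V ∈ 𝓝 0) :
    ∃ y, y ∈ interior (closure (T '' V)) := by
  haveI : (𝓤 Y).IsCountablyGenerated := by
    rw [uniformity_eq_comap_nhds_zero Y]
    exact Filter.comap.isCountablyGenerated _ _
  haveI : Nonempty Y := ⟨0⟩
  have hcover : (⋃ n : ℕ, closure (T '' (((n : ℝ) + 1) • V))) = univ := by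
    refine eq_univ_of_forall fun y => ?_
    obtain ⟨x, rfl⟩ := hT y
    have h0 : Tendsto (fun n : ℕ => ((n : ℝ) + 1)⁻¹ • x) atTop (𝓝 0) := by
      have h1 : Tendsto (fun n : ℕ => ((n : ℝ) + 1)⁻¹) atTop (𝓝 0) := by
        simpa [one_div] using tendsto_one_div_add_atTop_nhds_zero_nat (𝕜 := ℝ)
      simpa using h1.smul_const x
    obtain ⟨n, hn⟩ := (h0.eventually_mem hV).exists
    have hne : ((n : ℝ) + 1) ≠ 0 := by positivity
    refine mem_iUnion.2 ⟨n, subset_closure ⟨x, ?_, rfl⟩⟩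
    rw [mem_smul_set_iff_inv_smul_mem₀ hne]
    exact hn
  obtain ⟨n, y, hy⟩ := nonempty_interior_of_iUnion_of_closed (fun n => isClosed_closure) hcover
  have hne : ((n : ℝ) + 1) ≠ 0 := by positivity
  have himg : T '' (((n : ℝ) + 1) • V) = ((n : ℝ) + 1) • (T '' V) :=
    image_smul_set (M := ℝ) (α := X) (β := Y) (f := T) (c := ((n : ℝ) + 1)) (s := V)
  rw [himg, closure_smul₀' hne, interior_smul₀ hne] at hy
  obtain ⟨z, hz, -⟩ := hy
  exact ⟨z, hz⟩

/-- The closure of the image of any neighborhood of zero is a neighborhood of zero. -/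
lemma closure_image_nhds (T : X →L[ℝ] Y) (hT : Surjective T) {W : Set X} (hW : W ∈ 𝓝 0) :
    closure (T '' W) ∈ 𝓝 (0 : Y) := by
  obtain ⟨V, hV, hVW⟩ := exists_nhds_zero_half hW
  set V' : Set X := V ∩ -V with hV'def
  have hV' : V' ∈ 𝓝 0 := Filter.inter_mem hV (neg_mem_nhds_zero X hV)
  obtain ⟨y₀, hy₀⟩ := dense_image T hT hV'
  -- the open set `interior (closure (T '' V')) - y₀` is a neighborhood of `0`
  have hopen : IsOpen ((fun w => w - y₀) '' interior (closure (T '' V'))) :=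
    (Homeomorph.subRight y₀).isOpenMap _ isOpen_interior
  have h0mem : (0 : Y) ∈ (fun w => w - y₀) '' interior (closure (T '' V')) :=
    ⟨y₀, hy₀, sub_self y₀⟩
  refine Filter.mem_of_superset (hopen.mem_nhds h0mem) ?_
  rintro - ⟨w, hw, rfl⟩
  -- `w - y₀ ∈ closure (T '' V') - closure (T '' V') ⊆ closure (T '' W)`
  have hw' : w ∈ closure (T '' V') := interior_subset hw
  have hy₀' : y₀ ∈ closure (T '' V') := interior_subset hy₀
  have : w - y₀ ∈ closure ((T '' V') - (T '' V')) :=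
    map_mem_closure₂ continuous_sub hw' hy₀' fun a ha b hb => sub_mem_sub ha hb
  refine closure_mono ?_ this
  rintro - ⟨-, ⟨a, ha, rfl⟩, -, ⟨b, hb, rfl⟩, rfl⟩
  refine ⟨a - b, ?_, map_sub T a b⟩
  rw [sub_eq_add_neg]
  exact hVW a ha.1 (-b) (by simpa using hb.2)

/-- Open mapping theorem step: the image of a neighborhood of zero is a neighborhood
of zero. -/
lemma image_nhds (T : X →L[ℝ] Y) (hT : Surjective T) {U : Set X} (hU : U ∈ 𝓝 0) :
    T '' U ∈ 𝓝 (0 : Y) := by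
  obtain ⟨W, hWmem, hWclosed, hWU⟩ := exists_mem_nhds_isClosed_subset hU
  obtain ⟨u, hu, humul⟩ := IsTopologicalAddGroup.exists_antitone_basis_nhds_zero X
  obtain ⟨i0, -, hi0⟩ := hu.toHasBasis.mem_iff.1 hWmem
  set v : ℕ → Set X := fun n => u (i0 + n) ∩ -u (i0 + n) with hvdef
  have humem : ∀ n, u n ∈ 𝓝 (0 : X) := fun n => hu.toHasBasis.mem_of_mem trivial
  have hvmem : ∀ n, v n ∈ 𝓝 (0 : X) := fun n =>
    Filter.inter_mem (humem _) (neg_mem_nhds_zero X (humem _))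
  have hvanti : ∀ m n, m ≤ n → v n ⊆ v m := fun m n h =>
    inter_subset_inter (hu.antitone (by omega))
      (Set.neg_subset_neg.2 (hu.antitone (by omega)))
  have hsymm : ∀ i a, a ∈ v i → -a ∈ v i := fun i a ha =>
    ⟨Set.mem_neg.1 ha.2, by rw [Set.mem_neg, neg_neg]; exact ha.1⟩
  have hvadd : ∀ n, v (n + 1) + v (n + 1) ⊆ v n := by
    intro n
    rintro - ⟨a, ha, b, hb, rfl⟩
    refine ⟨humul (i0 + n) (Set.add_mem_add ha.1 hb.1), ?_⟩
    rw [Set.mem_neg, neg_add]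
    exact humul (i0 + n) (Set.add_mem_add (Set.mem_neg.1 ha.2) (Set.mem_neg.1 hb.2))
  have hvbasis : (𝓝 (0 : X)).HasBasis (fun _ : ℕ => True) v := by
    refine hu.toHasBasis.to_hasBasis' (fun i _ => ⟨i, trivial, ?_⟩) (fun i _ => hvmem i)
    exact inter_subset_left.trans (hu.antitone (Nat.le_add_left i i0))
  have hv0W : v 0 ⊆ W := inter_subset_left.trans (by simpa using hi0)
  -- the inductive step
  have step : ∀ n (z : Y), z ∈ closure (T '' v (n + 1)) →
      ∃ x, x ∈ v (n + 1) ∧ z - T x ∈ closure (T '' v (n + 2)) := by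
    intro n z hz
    have hnb : closure (T '' v (n + 2)) ∈ 𝓝 (0 : Y) := closure_image_nhds T hT (hvmem (n + 2))
    have htend : Tendsto (fun w : Y => z - w) (𝓝 z) (𝓝 0) := by
      have h1 : Tendsto (fun w : Y => z - w) (𝓝 z) (𝓝 (z - z)) :=
        tendsto_const_nhds.sub tendsto_id
      simpa using h1
    obtain ⟨w, hw1, hw2⟩ := mem_closure_iff_nhds.1 hz _ (mem_map.1 (htend hnb))
    obtain ⟨x, hx, rfl⟩ := hw2
    exact ⟨x, hx, hw1⟩
  suffices hsub : closure (T '' v 1) ⊆ T '' U by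
    exact mem_of_superset (closure_image_nhds T hT (hvmem 1)) hsub
  intro y hy
  -- construct the sequence of approximations
  let Zs : ∀ n : ℕ, {z : Y // z ∈ closure (T '' v (n + 1))} := fun n =>
    Nat.rec ⟨y, hy⟩ (fun k zk =>
      ⟨zk.1 - T (Classical.choose (step k zk.1 zk.2)),
        (Classical.choose_spec (step k zk.1 zk.2)).2⟩) n
  let xs : ℕ → X := fun n => Classical.choose (step n (Zs n).1 (Zs n).2)
  have hxs : ∀ n, xs n ∈ v (n + 1) := fun n =>
    (Classical.choose_spec (step n (Zs n).1 (Zs n).2)).1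
  have hZsucc : ∀ n, (Zs (n + 1)).1 = (Zs n).1 - T (xs n) := fun n => rfl
  set σ : ℕ → X := fun n => ∑ i ∈ Finset.range n, xs i with hσdef
  have hsum : ∀ k n, (∑ i ∈ Finset.Ico n (n + k + 1), xs i) ∈ v n := by
    intro k
    induction k with
    | zero =>
        intro n
        rw [Nat.Ico_succ_singleton, Finset.sum_singleton]
        exact hvanti n (n + 1) (Nat.le_succ n) (hxs n)
    | succ k ih =>
        intro n
        rw [Finset.sum_eq_sum_Ico_succ_bot (by omega)]
        refine hvadd n (Set.add_mem_add (hxs n) ?_)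
        rw [show n + (k + 1) + 1 = n + 1 + k + 1 from by omega]
        exact ih (n + 1)
  have hσdiff : ∀ m n, m < n → σ n - σ m ∈ v m := by
    intro m n hmn
    obtain ⟨k, rfl⟩ : ∃ k, n = m + k + 1 := ⟨n - m - 1, by omega⟩
    rw [hσdef]
    rw [← Finset.sum_Ico_eq_sub _ (by omega : m ≤ m + k + 1)]
    exact hsum k m
  have hcauchy : CauchySeq σ := by
    have h𝓤X : (𝓤 X).HasBasis (fun _ : ℕ => True)
        (fun i => (fun p : X × X => p.2 - p.1) ⁻¹' v i) := by
      have := hvbasis.comap (fun p : X × X => p.2 - p.1)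
      rwa [← uniformity_eq_comap_nhds_zero X] at this
    rw [h𝓤X.cauchySeq_iff']
    intro i _
    refine ⟨i, fun n hn => ?_⟩
    simp only [Set.mem_preimage]
    rcases eq_or_lt_of_le hn with rfl | hlt
    · simpa using mem_of_mem_nhds (hvmem i)
    · have := hσdiff i n hlt
      simpa using hsymm i _ this
  obtain ⟨xlim, hlim⟩ := cauchySeq_tendsto_of_complete hcauchy
  have hxlimW : xlim ∈ W := by
    refine hWclosed.mem_of_tendsto hlim (eventually_atTop.2 ⟨1, fun n hn => ?_⟩)
    have : σ n - σ 0 ∈ v 0 := hσdiff 0 n hn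
    simp only [hσdef, Finset.range_zero, Finset.sum_empty, sub_zero] at this
    exact hv0W this
  have hTσ : ∀ n, T (σ n) = y - (Zs n).1 := by
    intro n
    induction n with
    | zero => simp [hσdef, Zs]
    | succ n ih =>
        have h1 : σ (n + 1) = σ n + xs n := Finset.sum_range_succ xs n
        have h2 := hZsucc n
        rw [h1, map_add, ih, h2]
        abel
  have hZtend : Tendsto (fun n => (Zs n).1) atTop (𝓝 0) := by
    intro O hO
    rw [mem_map]
    obtain ⟨C, hCmem, hCclosed, hCO⟩ := exists_mem_nhds_isClosed_subset hO
    have hpre : T ⁻¹' interior C ∈ 𝓝 (0 : X) := by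
      have hTc : Tendsto T (𝓝 0) (𝓝 (0 : Y)) := by
        simpa using T.continuous.tendsto 0
      exact mem_map.1 (hTc (interior_mem_nhds.2 hCmem))
    obtain ⟨i, -, hi⟩ := hvbasis.mem_iff.1 hpre
    have hTviC : T '' v i ⊆ C := by
      rintro - ⟨x, hx, rfl⟩
      exact interior_subset (hi hx)
    filter_upwards [eventually_ge_atTop i] with n hn
    have h1 : (Zs n).1 ∈ closure (T '' v i) :=
      closure_mono (image_mono (hvanti i (n + 1) (by omega))) (Zs n).2
    exact hCO (closure_minimal hTviC hCclosed h1)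
  have hTlim : Tendsto (fun n => T (σ n)) atTop (𝓝 (T xlim)) :=
    (T.continuous.tendsto xlim).comp hlim
  have hTlim' : Tendsto (fun n => T (σ n)) atTop (𝓝 y) := by
    have hconst : Tendsto (fun _ : ℕ => y) atTop (𝓝 y) := tendsto_const_nhds
    have := hconst.sub hZtend
    simp only [sub_zero] at this
    exact Tendsto.congr (fun n => (hTσ n).symm) this
  have : T xlim = y := tendsto_nhds_unique hTlim hTlim'
  exact ⟨xlim, hWU hxlimW, this⟩



/-- A linear functional whose composition with a surjective "open-mapping" operator is
continuous is itself continuous. -/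
lemma continuous_of_comp (T : X →L[ℝ] Y) (hT : Surjective T) (h : Y →ₗ[ℝ] ℝ)
    (hc : Continuous fun x => h (T x)) : Continuous h := by
  refine continuous_of_continuousAt_zero h.toAddMonoidHom ?_
  rw [ContinuousAt, LinearMap.toAddMonoidHom_coe, map_zero]
  intro O hO
  rw [mem_map]
  have hpre : (fun x => h (T x)) ⁻¹' O ∈ 𝓝 (0 : X) := by
    have : Tendsto (fun x => h (T x)) (𝓝 0) (𝓝 0) := by
      have := hc.tendsto 0
      simpa using this
    exact mem_map.1 (this hO)
  refine Filter.mem_of_superset (image_nhds T hT hpre) ?_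
  rintro - ⟨x, hx, rfl⟩
  exact hx

end OMT

/-- If `X`, `Y` are real Fréchet spaces (complete metrizable topological vector spaces)
and `T : X → Y` is a surjective continuous linear map, then the image of a closed
polyhedral cone of `X` under `T` is a closed polyhedral cone of `Y`. -/
theorem image_of_closedPolyhedralCone_isClosedPolyhedralCone
    {X Y : Type*}
    [AddCommGroup X] [Module ℝ X] [UniformSpace X] [IsUniformAddGroup X]
    [ContinuousSMul ℝ X] [CompleteSpace X] [TopologicalSpace.MetrizableSpace X]
    [AddCommGroup Y] [Module ℝ Y] [UniformSpace Y] [IsUniformAddGroup Y]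
    [ContinuousSMul ℝ Y] [CompleteSpace Y] [TopologicalSpace.MetrizableSpace Y]
    (T : X →L[ℝ] Y) (hT : Function.Surjective T)
    (A : Set X) (hA : IsClosedPolyhedralCone A) :
    IsClosedPolyhedralCone (T '' A) := by
  classical
  obtain ⟨n, -, f, rfl⟩ := hA
  -- bundle the functionals into a map to `ℝⁿ`
  set φ : X →ₗ[ℝ] (Fin n → ℝ) := LinearMap.pi (fun k => (f k : X →ₗ[ℝ] ℝ)) with hφdef
  have hφcont : Continuous φ := continuous_pi fun k => (f k).continuous
  set L : Submodule ℝ (Fin n → ℝ) := Submodule.map φ (LinearMap.ker (T : X →ₗ[ℝ] Y)) with hLdef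
  obtain ⟨s, hs⟩ : L.FG := IsNoetherian.noetherian L
  obtain ⟨κ, _, g, hg0, hgset⟩ :=
    fm_finset (fun k => (LinearMap.proj k : (Fin n → ℝ) →ₗ[ℝ] ℝ)) s
  -- each `g j` kills `L`
  have hgL : ∀ j, ∀ c ∈ L, g j c = 0 := by
    intro j c hc
    rw [← hs] at hc
    have hle : Submodule.span ℝ (s : Set (Fin n → ℝ)) ≤ LinearMap.ker (g j) :=
      Submodule.span_le.2 fun w hw => LinearMap.mem_ker.2 (hg0 j w hw)
    exact LinearMap.mem_ker.1 (hle hc)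
  -- well-definedness of the induced functionals on Y
  have hwell : ∀ j (x x' : X), T x = T x' → g j (φ x) = g j (φ x') := by
    intro j x x' hxx
    have hker : x - x' ∈ LinearMap.ker (T : X →ₗ[ℝ] Y) := by
      rw [LinearMap.mem_ker]
      simp only [ContinuousLinearMap.coe_coe, map_sub]
      rw [hxx, sub_self]
    have : g j (φ (x - x')) = 0 := hgL j _ ⟨x - x', hker, rfl⟩
    rw [map_sub, map_sub, sub_eq_zero] at this
    exact this
  -- the induced functionals on Y
  set h : κ → Y →ₗ[ℝ] ℝ := fun j =>
    { toFun := fun y => g j (φ (surjInv hT y))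
      map_add' := by
        intro a b
        show g j (φ (surjInv hT (a + b))) = g j (φ (surjInv hT a)) + g j (φ (surjInv hT b))
        have h1 : T (surjInv hT a + surjInv hT b) = T (surjInv hT (a + b)) := by
          simp [map_add, surjInv_eq hT]
        rw [← hwell j _ _ h1, map_add, map_add]
      map_smul' := by
        intro c a
        show g j (φ (surjInv hT (c • a))) = (RingHom.id ℝ) c • g j (φ (surjInv hT a))
        have h1 : T (c • surjInv hT a) = T (surjInv hT (c • a)) := by
          simp [map_smul, surjInv_eq hT]
        rw [← hwell j _ _ h1, map_smul, map_smul]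
        rfl } with hhdef
  have hhT : ∀ j x, h j (T x) = g j (φ x) := by
    intro j x
    exact hwell j (surjInv hT (T x)) x (surjInv_eq hT (T x))
  have hhcont : ∀ j, Continuous (h j) := by
    intro j
    refine continuous_of_comp T hT (h j) ?_
    have : (fun x => h j (T x)) = fun x => g j (φ x) := funext fun x => hhT j x
    rw [this]
    exact ((g j).continuous_of_finiteDimensional).comp hφcont
  -- the set identity
  have hmain : T '' {x | ∀ k, f k x ≤ 0} = {y | ∀ j, h j y ≤ 0} := by
    ext y
    constructor
    · rintro ⟨x, hx, rfl⟩ j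
      rw [hhT j x]
      refine (Set.ext_iff.mp hgset (φ x)).1 ⟨0, Submodule.zero_mem _, fun k => ?_⟩ j
      simpa [hφdef] using hx k
    · intro hy
      have hx₀ : T (surjInv hT y) = y := surjInv_eq hT y
      have hφx₀ : ∀ j, g j (φ (surjInv hT y)) ≤ 0 := fun j => hy j
      obtain ⟨c, hc, hcx⟩ := (Set.ext_iff.mp hgset (φ (surjInv hT y))).2 hφx₀
      rw [hs] at hc
      obtain ⟨w, hw, rfl⟩ := hc
      refine ⟨surjInv hT y - w, fun k => ?_, ?_⟩
      · have := hcx k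
        simpa [hφdef] using this
      · rw [map_sub, hx₀]
        have : T w = 0 := LinearMap.mem_ker.1 hw
        rw [this, sub_zero]
  rw [hmain]
  -- package as `Fin (card κ + 1)` functionals (to guarantee positivity of the count)
  set e := Fintype.equivFin κ with hedef
  refine ⟨Fintype.card κ + 1, Nat.succ_pos _,
    Fin.cons 0 (fun i => ⟨h (e.symm i), hhcont (e.symm i)⟩), ?_⟩
  ext y
  constructor
  · intro hy m
    refine Fin.cases ?_ (fun i => ?_) m
    · simp
    · rw [Fin.cons_succ]
      exact hy (e.symm i)
  · intro hy j
    have := hy (Fin.succ (e j))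
    rw [Fin.cons_succ] at this
    simpa [hedef] using this
end

section
/- (Sard quotient theorem, Fréchet version.) Let X and Y be real Fréchet spaces, let Z be a real topological vector space, and let S : X → Y and T : X → Z be continuous linear maps with S surjective. If ker S ⊆ ker T, then there exists a unique continuous linear map R : Y → Z such that T = R ∘ S. -/
open Filter Set Topology Function
open scoped Pointwise Uniformity

section OMT

variable {X Y : Type*}
  [AddCommGroup X] [Module ℝ X] [UniformSpace X] [IsUniformAddGroup X]
  [ContinuousSMul ℝ X] [CompleteSpace X] [TopologicalSpace.MetrizableSpace X]
  [AddCommGroup Y] [Module ℝ Y] [UniformSpace Y] [IsUniformAddGroup Y]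
  [ContinuousSMul ℝ Y] [CompleteSpace Y] [TopologicalSpace.MetrizableSpace Y]

private lemma sard_aux_cg : (𝓤 Y).IsCountablyGenerated := by
  rw [uniformity_eq_comap_nhds_zero]
  infer_instance

/-- First half of the open mapping theorem: the closure of the image of a
neighborhood of zero is a neighborhood of zero (Baire category argument). -/
private lemma sard_lemA (S : X →L[ℝ] Y) (hS : Function.Surjective S)
    {V : Set X} (hV : V ∈ 𝓝 0) : closure (S '' V) ∈ 𝓝 (0 : Y) := by
  haveI : (𝓤 Y).IsCountablyGenerated := sard_aux_cg
  obtain ⟨W₀, hW₀, hW₀V⟩ := exists_nhds_zero_half hV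
  set W : Set X := W₀ ∩ (-W₀) with hWdef
  have hW : W ∈ 𝓝 0 := Filter.inter_mem hW₀ (neg_mem_nhds_zero X hW₀)
  set A : Set Y := S '' W with hA
  have hsub : ∀ a ∈ A, ∀ b ∈ A, a - b ∈ S '' V := by
    rintro _ ⟨w, hw, rfl⟩ _ ⟨w', hw', rfl⟩
    refine ⟨w + -w', hW₀V _ hw.1 _ (Set.mem_neg.1 hw'.2), ?_⟩
    simp [sub_eq_add_neg]
  have habs := absorbent_nhds_zero (𝕜 := ℝ) hW
  have hcover : ∀ y : Y, ∃ n : ℕ, y ∈ closure (((n : ℝ) + 1) • A) := by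
    intro y
    obtain ⟨x, rfl⟩ := hS y
    obtain ⟨r, hr⟩ := absorbs_iff_norm.1 (habs x)
    obtain ⟨n, hn⟩ : ∃ n : ℕ, r ≤ (n : ℝ) + 1 :=
      ⟨⌈r⌉₊, by have := Nat.le_ceil r; push_cast; linarith⟩
    have hx : x ∈ ((n : ℝ) + 1) • W := by
      have h1 : ({x} : Set X) ⊆ ((n : ℝ) + 1) • W := by
        refine hr ((n : ℝ) + 1) ?_
        rw [Real.norm_eq_abs, abs_of_nonneg (by positivity)]
        exact hn
      exact h1 rfl
    refine ⟨n, subset_closure ?_⟩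
    obtain ⟨w, hw, rfl⟩ := hx
    exact ⟨S w, ⟨w, hw, rfl⟩, (S.map_smul _ _).symm⟩
  haveI : Nonempty Y := ⟨0⟩
  have hdense : ⋃ n : ℕ, closure (((n : ℝ) + 1) • A) = univ :=
    eq_univ_of_forall fun y => mem_iUnion.2 (hcover y)
  obtain ⟨n, hn⟩ := nonempty_interior_of_iUnion_of_closed
    (fun n : ℕ => isClosed_closure) hdense
  have hc : ((n : ℝ) + 1) ≠ 0 := by positivity
  have h1 : closure (((n : ℝ) + 1) • A) = ((n : ℝ) + 1) • closure A :=
    closure_smul₀' hc A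
  rw [h1, interior_smul₀ hc] at hn
  obtain ⟨y₀, hy₀⟩ : (interior (closure A)).Nonempty := smul_set_nonempty.1 hn
  have hmem : (fun z : Y => z + y₀) ⁻¹' interior (closure A) ∈ 𝓝 0 := by
    apply (continuous_id.add continuous_const).continuousAt.preimage_mem_nhds
    simpa using isOpen_interior.mem_nhds hy₀
  refine mem_of_superset hmem ?_
  intro z hz
  have hy₀' : y₀ ∈ closure A := interior_subset hy₀
  have hz' : z + y₀ ∈ closure A := interior_subset hz
  have key : ∀ p ∈ closure A ×ˢ closure A, p.1 - p.2 ∈ closure (S '' V) := by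
    intro p hp
    rw [← closure_prod_eq] at hp
    have himg := image_closure_subset_closure_image
      (f := fun p : Y × Y => p.1 - p.2) (s := A ×ˢ A) (by fun_prop)
    have hmem2 : p.1 - p.2 ∈ closure ((fun p : Y × Y => p.1 - p.2) '' (A ×ˢ A)) :=
      himg ⟨p, hp, rfl⟩
    refine closure_mono ?_ hmem2
    rintro _ ⟨q, hq, rfl⟩
    exact hsub _ hq.1 _ hq.2
  have := key (z + y₀, y₀) ⟨hz', hy₀'⟩
  simpa using this

/-- Open mapping theorem for Fréchet spaces, at zero: the image of a neighborhood
of zero under a surjective continuous linear map is a neighborhood of zero. -/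
private lemma sard_lemB (S : X →L[ℝ] Y) (hS : Function.Surjective S)
    {U : Set X} (hU : U ∈ 𝓝 0) : S '' U ∈ 𝓝 (0 : Y) := by
  obtain ⟨b, hb⟩ := (𝓝 (0 : X)).exists_antitone_basis
  have key : ∀ A : Set X, A ∈ 𝓝 (0 : X) → ∀ n : ℕ, ∃ B : Set X,
      B ∈ 𝓝 (0 : X) ∧ B + B ⊆ A ∧ B ⊆ b n ∧ -B ⊆ b n := by
    intro A hA n
    obtain ⟨C, hC, hCA⟩ := exists_nhds_zero_half hA
    have hbn : b n ∈ 𝓝 (0 : X) := hb.1.mem_of_mem trivial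
    refine ⟨C ∩ b n ∩ (-(b n)), ?_, ?_, fun x hx => hx.1.2, ?_⟩
    · exact Filter.inter_mem (Filter.inter_mem hC hbn) (neg_mem_nhds_zero X hbn)
    · exact Set.add_subset_iff.2 fun x hx y hy => hCA _ hx.1.1 _ hy.1.1
    · intro x hx
      have h2 := (Set.mem_neg.1 hx).2
      simpa using Set.mem_neg.1 h2
  choose! B hB1 hB2 hB3 hB4 using key
  let V : ℕ → Set X := fun n => Nat.rec (B U 0) (fun n Vn => B Vn (n + 1)) n
  have hVmem : ∀ n, V n ∈ 𝓝 (0 : X) := by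
    intro n; induction n with
    | zero => exact hB1 U hU 0
    | succ n ih => exact hB1 _ ih _
  have hVadd : ∀ n, V (n + 1) + V (n + 1) ⊆ V n := fun n => hB2 _ (hVmem n) _
  have hV0U : V 0 + V 0 ⊆ U := hB2 U hU 0
  have hVb : ∀ n, V n ⊆ b n := by
    intro n; cases n with
    | zero => exact hB3 U hU 0
    | succ n => exact hB3 _ (hVmem n) _
  have hVnb : ∀ n, -V n ⊆ b n := by
    intro n; cases n with
    | zero => exact hB4 U hU 0
    | succ n => exact hB4 _ (hVmem n) _
  have hzero : ∀ n, (0 : X) ∈ V n := fun n => mem_of_mem_nhds (hVmem n)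
  have hVstep : ∀ n, V (n + 1) ⊆ V n := by
    intro n x hx
    have := hVadd n (Set.add_mem_add hx (hzero (n + 1)))
    simpa using this
  have hVanti : ∀ {m n : ℕ}, m ≤ n → V n ⊆ V m := by
    intro m n h
    induction n, h using Nat.le_induction with
    | base => exact subset_rfl
    | succ n hmn ih => exact (hVstep n).trans ih
  have hsum : ∀ (x : ℕ → X), (∀ i, x i ∈ V (i + 1)) → ∀ k n,
      ∑ i ∈ Finset.Ico n (n + k), x i ∈ V n := by
    intro x hx k
    induction k with
    | zero => intro n; simpa using hzero n
    | succ k ih =>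
      intro n
      have h1 : n < n + (k + 1) := by omega
      rw [Finset.sum_eq_sum_Ico_succ_bot h1]
      have h2 := ih (n + 1)
      have h3 : n + 1 + k = n + (k + 1) := by omega
      rw [h3] at h2
      exact hVadd n (Set.add_mem_add (hx n) h2)
  have hUb : (𝓤 X).HasBasis (fun _ : ℕ => True)
      (fun n => {p : X × X | p.2 - p.1 ∈ b n}) := by
    rw [uniformity_eq_comap_nhds_zero]
    exact hb.1.comap _
  have hstep : ∀ (n : ℕ) (z : Y), z ∈ closure (S '' V (n + 1)) →
      ∃ x : X, x ∈ V (n + 1) ∧ z - S x ∈ closure (S '' V (n + 2)) := by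
    intro n z hz
    have hnb : closure (S '' V (n + 2)) ∈ 𝓝 (0 : Y) := sard_lemA S hS (hVmem (n + 2))
    have hpre : (fun w : Y => z - w) ⁻¹' closure (S '' V (n + 2)) ∈ 𝓝 z := by
      apply (continuous_const.sub continuous_id).continuousAt.preimage_mem_nhds
      simpa using hnb
    obtain ⟨w, hw1, hw2⟩ := (mem_closure_iff_nhds.1 hz) _ hpre
    obtain ⟨x, hx, rfl⟩ := hw2
    exact ⟨x, hx, hw1⟩
  have hkey : closure (S '' V 1) ⊆ S '' U := by
    intro y hy
    choose! f hf1 hf2 using hstep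
    let z : ℕ → Y := fun n => Nat.rec y (fun n zn => zn - S (f n zn)) n
    have hzc : ∀ n, z n ∈ closure (S '' V (n + 1)) := by
      intro n; induction n with
      | zero => exact hy
      | succ n ih => exact hf2 n (z n) ih
    set x : ℕ → X := fun n => f n (z n) with hxdef
    have hzs : ∀ n, z (n + 1) = z n - S (x n) := fun n => rfl
    have hxV : ∀ n, x n ∈ V (n + 1) := fun n => hf1 n (z n) (hzc n)
    set s : ℕ → X := fun n => ∑ i ∈ Finset.range n, x i with hsdef
    have hzy : ∀ n, z n = y - S (s n) := by
      intro n; induction n with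
      | zero => simp [hsdef, z]
      | succ n ih =>
        rw [hzs n, ih]
        simp [hsdef, Finset.sum_range_succ, map_add, sub_sub]
    have hdiff : ∀ m n, m ≤ n → s n - s m ∈ V m := by
      intro m n hmn
      have h2 := hsum x hxV (n - m) m
      rw [Nat.add_sub_cancel' hmn] at h2
      rw [Finset.sum_Ico_eq_sub _ hmn] at h2
      simpa [hsdef] using h2
    have hcauchy : CauchySeq s := by
      rw [hUb.cauchySeq_iff]
      intro i _
      refine ⟨i, fun m hm n hn => ?_⟩
      rcases le_total m n with h | h
      · exact hVb i (hVanti hm (hdiff m n h))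
      · have h3 : s m - s n ∈ V i := hVanti hn (hdiff n m h)
        have h4 : s n - s m ∈ -V i := by rw [Set.mem_neg, neg_sub]; exact h3
        exact hVnb i h4
    obtain ⟨x₀, hx₀⟩ := cauchySeq_tendsto_of_complete hcauchy
    have hz0' : Tendsto z atTop (𝓝 (0 : Y)) := by
      rw [tendsto_def]
      intro N hN
      obtain ⟨N', hN', hN'c, hN'N⟩ := exists_mem_nhds_isClosed_subset hN
      have hTN : S ⁻¹' N' ∈ 𝓝 (0 : X) := by
        apply S.continuous.continuousAt.preimage_mem_nhds
        simpa using hN'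
      obtain ⟨m, -, hm⟩ := hb.1.mem_iff.1 hTN
      refine Filter.mem_of_superset (Filter.Ici_mem_atTop m) ?_
      intro n hn
      have h1 : closure (S '' V (n + 1)) ⊆ N' := by
        rw [hN'c.closure_subset_iff]
        rintro _ ⟨v, hv, rfl⟩
        exact hm (hb.antitone (le_trans hn (Nat.le_succ n)) (hVb (n + 1) hv))
      exact hN'N (h1 (hzc n))
    have hS1 : Tendsto (fun n => y - S (s n)) atTop (𝓝 (y - S x₀)) :=
      tendsto_const_nhds.sub ((S.continuous.tendsto _).comp hx₀)
    have hz2 : Tendsto (fun n => y - S (s n)) atTop (𝓝 (0 : Y)) :=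
      hz0'.congr fun n => hzy n
    have heq0 : y - S x₀ = 0 := tendsto_nhds_unique hS1 hz2
    have hsV0 : ∀ n, s n ∈ V 0 := by
      intro n
      have := hdiff 0 n (Nat.zero_le n)
      simpa [hsdef] using this
    have hxc : x₀ ∈ closure (V 0) :=
      mem_closure_of_tendsto hx₀ (Eventually.of_forall hsV0)
    have hnbhd : (fun w : X => x₀ - w) ⁻¹' V 0 ∈ 𝓝 x₀ := by
      apply (continuous_const.sub continuous_id).continuousAt.preimage_mem_nhds
      simpa using hVmem 0
    obtain ⟨v, hv1, hv2⟩ := mem_closure_iff_nhds.1 hxc _ hnbhd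
    have hxU : x₀ ∈ U := by
      have := hV0U (Set.add_mem_add hv2 hv1)
      simpa using this
    exact ⟨x₀, hxU, (sub_eq_zero.1 heq0).symm⟩
  exact mem_of_superset (sard_lemA S hS (hVmem 1)) hkey

end OMT

/-- **Sard quotient theorem, Fréchet version.** If `X, Y` are real Fréchet spaces
(complete metrizable topological vector spaces), `Z` is a real topological vector space,
`S : X → Y` and `T : X → Z` are continuous linear maps, `S` is surjective and
`ker S ⊆ ker T`, then there is a unique continuous linear map `R : Y → Z` with
`T = R ∘ S`. -/
theorem sard_quotient_frechet
    {X Y Z : Type*}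
    [AddCommGroup X] [Module ℝ X] [UniformSpace X] [IsUniformAddGroup X]
    [ContinuousSMul ℝ X] [CompleteSpace X] [TopologicalSpace.MetrizableSpace X]
    [AddCommGroup Y] [Module ℝ Y] [UniformSpace Y] [IsUniformAddGroup Y]
    [ContinuousSMul ℝ Y] [CompleteSpace Y] [TopologicalSpace.MetrizableSpace Y]
    [AddCommGroup Z] [Module ℝ Z] [TopologicalSpace Z] [IsTopologicalAddGroup Z]
    [ContinuousSMul ℝ Z]
    (S : X →L[ℝ] Y) (T : X →L[ℝ] Z)
    (hS : Function.Surjective S)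
    (hker : LinearMap.ker (S : X →ₗ[ℝ] Y) ≤ LinearMap.ker (T : X →ₗ[ℝ] Z)) :
    ∃! R : Y →L[ℝ] Z, T = R.comp S := by
  classical
  set g : Y → X := Function.surjInv hS with hgdef
  have hg : ∀ y, S (g y) = y := fun y => Function.surjInv_eq hS y
  have heq : ∀ x x' : X, S x = S x' → T x = T x' := by
    intro x x' h
    have hk : x - x' ∈ LinearMap.ker (S : X →ₗ[ℝ] Y) := by
      rw [LinearMap.mem_ker, map_sub, ContinuousLinearMap.coe_coe, h, sub_self]
    have h2 := hker hk
    rw [LinearMap.mem_ker, map_sub] at h2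
    exact sub_eq_zero.1 h2
  have hcomp : ∀ x, T (g (S x)) = T x := fun x => heq _ _ (hg (S x))
  let R₀ : Y →ₗ[ℝ] Z :=
    { toFun := fun y => T (g y)
      map_add' := by
        intro y z
        show T (g (y + z)) = T (g y) + T (g z)
        have h1 : S (g (y + z)) = S (g y + g z) := by simp [hg, map_add]
        rw [heq _ _ h1, map_add]
      map_smul' := by
        intro c y
        show T (g (c • y)) = (RingHom.id ℝ) c • T (g y)
        have h1 : S (g (c • y)) = S (c • g y) := by simp [hg, map_smul]
        rw [heq _ _ h1, map_smul]
        rfl }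
  have hR₀ : ∀ x, R₀ (S x) = T x := fun x => hcomp x
  have hcont : Continuous R₀ := by
    apply continuous_of_continuousAt_zero R₀
    rw [ContinuousAt, map_zero]
    intro N hN
    rw [Filter.mem_map]
    have hTN : T ⁻¹' N ∈ 𝓝 (0 : X) := by
      apply T.continuous.continuousAt.preimage_mem_nhds
      simpa using hN
    apply Filter.mem_of_superset (sard_lemB S hS hTN)
    rintro _ ⟨x, hx, rfl⟩
    exact Set.mem_preimage.2 (by rw [hR₀ x]; exact hx)
  refine ⟨⟨R₀, hcont⟩, ?_, ?_⟩
  · ext x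
    exact (hR₀ x).symm
  · intro R' hR'
    ext y
    obtain ⟨x, rfl⟩ := hS y
    have h1 : T x = (R'.comp S) x := ContinuousLinearMap.ext_iff.1 hR' x
    show R' (S x) = R₀ (S x)
    rw [hR₀]
    exact h1.symm
end

section
/- Let X and Y be real Fréchet spaces, T : X → Y a surjective continuous linear map, n a positive integer, f₁,…,fₙ continuous linear functionals on X, and λ₁,…,λₙ real numbers such that ker T ⊆ ⋂ₖ ker fₖ. Then there exist continuous linear functionals g₁,…,gₙ on Y with fₖ = gₖ ∘ T for each k, and for any such g₁,…,gₙ the image T({x ∈ X : fₖ(x) ≤ λₖ for all k}) equals {y ∈ Y : gₖ(y) ≤ λₖ for all k}; in particular this image is a closed polyhedron. -/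
open Filter Topology Set Uniformity Function Pointwise

section OMT
variable {X Y : Type*}
  [AddCommGroup X] [Module ℝ X] [UniformSpace X] [IsUniformAddGroup X] [ContinuousSMul ℝ X]
  [AddCommGroup Y] [Module ℝ Y] [UniformSpace Y] [IsUniformAddGroup Y] [ContinuousSMul ℝ Y]

theorem stepA [CompleteSpace Y] [TopologicalSpace.MetrizableSpace Y]
    (T : X →L[ℝ] Y) (hT : Function.Surjective T) {V : Set X} (hV : V ∈ 𝓝 (0 : X)) :
    closure (T '' V) ∈ 𝓝 (0 : Y) := by
  haveI : (𝓤 Y).IsCountablyGenerated := by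
    rw [uniformity_eq_comap_nhds_zero]; infer_instance
  -- find W with W - W ⊆ V
  obtain ⟨W, hW, hWV⟩ : ∃ W ∈ 𝓝 (0 : X), ∀ a ∈ W, ∀ b ∈ W, a - b ∈ V := by
    have h : Tendsto (fun p : X × X => p.1 - p.2) (𝓝 0 ×ˢ 𝓝 0) (𝓝 (0 : X)) := by
      have h0 := (continuous_sub : Continuous fun p : X × X => p.1 - p.2).tendsto ((0 : X), (0 : X))
      rw [nhds_prod_eq] at h0
      simpa using h0
    rcases Filter.mem_prod_iff.1 (h hV) with ⟨W₁, h₁, W₂, h₂, hsub⟩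
    exact ⟨W₁ ∩ W₂, inter_mem h₁ h₂, fun a ha b hb =>
      hsub (Set.mk_mem_prod ha.1 hb.2)⟩
  set C := closure (T '' W) with hC
  -- Y is covered by the sets (n+1) • C
  have hcover : ∀ y : Y, ∃ n : ℕ, y ∈ ((n : ℝ) + 1) • C := by
    intro y
    obtain ⟨x, rfl⟩ := hT y
    have habs : Absorbs ℝ W {x} := absorbent_nhds_zero hW x
    have htend : Tendsto (fun n : ℕ => ((n : ℝ) + 1)) atTop (Bornology.cobounded ℝ) := by
      rw [← tendsto_norm_atTop_iff_cobounded]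
      have h1 : Tendsto (fun n : ℕ => ((n : ℝ) + 1)) atTop atTop :=
        tendsto_atTop_add_const_right _ 1 tendsto_natCast_atTop_atTop
      refine h1.congr fun n => ?_
      rw [Real.norm_eq_abs, abs_of_nonneg (by positivity)]
    obtain ⟨n, hn⟩ := (htend.eventually habs).exists
    have hx : x ∈ ((n : ℝ) + 1) • W := hn rfl
    obtain ⟨w, hw, rfl⟩ := hx
    refine ⟨n, ?_⟩
    rw [map_smul]
    exact Set.smul_mem_smul_set (subset_closure (Set.mem_image_of_mem _ hw))
  -- Baire
  have hne : ∃ n : ℕ, (interior (((n : ℝ) + 1) • C)).Nonempty := by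
    apply nonempty_interior_of_iUnion_of_closed
    · intro n
      have : IsClosed ((fun y : Y => ((n : ℝ) + 1) • y) '' C) :=
        (isClosedMap_smul_of_ne_zero (by positivity : ((n : ℝ) + 1) ≠ 0)) _ isClosed_closure
      simpa [Set.image_smul] using this
    · exact Set.eq_univ_of_forall fun y => Set.mem_iUnion.2 (hcover y)
  obtain ⟨n, hn⟩ := hne
  have hCint : (interior C).Nonempty := by
    rw [interior_smul₀ (by positivity : ((n : ℝ) + 1) ≠ 0)] at hn
    obtain ⟨-, u, hu, -⟩ := hn
    exact ⟨u, hu⟩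
  obtain ⟨z, hz⟩ := hCint
  -- C - C ⊆ closure (T '' V)
  have hsub : ∀ a ∈ C, ∀ b ∈ C, a - b ∈ closure (T '' V) := by
    intro a ha b hb
    have h1 : (a, b) ∈ closure ((T '' W) ×ˢ (T '' W)) := by
      rw [closure_prod_eq]; exact ⟨ha, hb⟩
    have h2 : a - b ∈ closure ((fun p : Y × Y => p.1 - p.2) '' ((T '' W) ×ˢ (T '' W))) :=
      (image_closure_subset_closure_image continuous_sub) (Set.mem_image_of_mem _ h1)
    refine closure_mono ?_ h2
    rintro _ ⟨⟨p, q⟩, ⟨⟨u, hu, rfl⟩, ⟨v, hv, rfl⟩⟩, rfl⟩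
    exact ⟨u - v, hWV u hu v hv, by simp⟩
  -- conclude
  have : (fun y => y - z) '' interior C ∈ 𝓝 (0 : Y) := by
    have : IsOpen ((fun y => y - z) '' interior C) :=
      (Homeomorph.subRight z).isOpenMap _ isOpen_interior
    exact this.mem_nhds ⟨z, hz, sub_self z⟩
  exact Filter.mem_of_superset this (by
    rintro _ ⟨u, hu, rfl⟩
    exact hsub u (interior_subset hu) z (interior_subset hz))

theorem key_nhds [CompleteSpace X] [TopologicalSpace.MetrizableSpace X]
    [CompleteSpace Y] [TopologicalSpace.MetrizableSpace Y]
    (T : X →L[ℝ] Y) (hT : Function.Surjective T) {V : Set X} (hV : V ∈ 𝓝 (0 : X)) :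
    T '' V ∈ 𝓝 (0 : Y) := by
  -- countable antitone basis of 𝓝 0 in X
  haveI : (𝓝 (0 : X)).IsCountablyGenerated := by infer_instance
  obtain ⟨b, hb⟩ := (𝓝 (0 : X)).exists_antitone_basis
  -- shrink lemma
  have shrink : ∀ s : Set X, s ∈ 𝓝 (0 : X) → ∃ t, t ∈ 𝓝 (0 : X) ∧ IsClosed t ∧ t + t ⊆ s := by
    intro s hs
    have h : Tendsto (fun p : X × X => p.1 + p.2) (𝓝 0 ×ˢ 𝓝 0) (𝓝 (0 : X)) := by
      have h0 := (continuous_add : Continuous fun p : X × X => p.1 + p.2).tendsto ((0 : X), (0 : X))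
      rw [nhds_prod_eq] at h0
      simpa using h0
    rcases Filter.mem_prod_iff.1 (h hs) with ⟨W₁, h₁, W₂, h₂, hsub⟩
    obtain ⟨t, ht, htc, hts⟩ := exists_mem_nhds_isClosed_subset (inter_mem h₁ h₂)
    refine ⟨t, ht, htc, ?_⟩
    rintro z ⟨a, ha, c, hc, rfl⟩
    exact hsub (Set.mk_mem_prod (hts ha).1 (hts hc).2)
  choose sh hsh1 hsh2 hsh3 using shrink
  -- build the sequence U
  let Usq : ℕ → {s : Set X // s ∈ 𝓝 (0 : X)} := fun n =>
    Nat.rec ⟨sh V hV, hsh1 V hV⟩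
      (fun n p => ⟨sh (p.1 ∩ b n) (inter_mem p.2 (hb.mem n)), hsh1 _ _⟩) n
  let U : ℕ → Set X := fun n => (Usq n).1
  have hUmem : ∀ n, U n ∈ 𝓝 (0 : X) := fun n => (Usq n).2
  have hU0 : ∀ n, (0 : X) ∈ U n := fun n => mem_of_mem_nhds (hUmem n)
  have hUcl : ∀ n, IsClosed (U n) := by
    intro n
    cases n with
    | zero => exact hsh2 V hV
    | succ n => exact hsh2 _ _
  have hUadd : ∀ n, U (n + 1) + U (n + 1) ⊆ U n ∩ b n := fun n => hsh3 _ _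
  have hU0V : U 0 ⊆ V := by
    intro z hz
    have : z + 0 ∈ V := hsh3 V hV (Set.add_mem_add hz (hU0 0))
    simpa using this
  have hUsub : ∀ n, U (n + 1) ⊆ U n := fun n z hz => by
    have : z + 0 ∈ U n ∩ b n := hUadd n (Set.add_mem_add hz (hU0 (n + 1)))
    simpa using this.1
  have hUb : ∀ n, U (n + 1) ⊆ b n := fun n z hz => by
    have : z + 0 ∈ U n ∩ b n := hUadd n (Set.add_mem_add hz (hU0 (n + 1)))
    simpa using this.2
  -- the key inclusion: closure (T '' U 1) ⊆ T '' V
  have main : closure (T '' U 1) ⊆ T '' (U 0) := by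
    intro y hy
    -- picking function
    have pick : ∀ n (y' : Y), y' ∈ closure (T '' U (n + 1)) →
        ∃ x', x' ∈ U (n + 1) ∧ y' - T x' ∈ closure (T '' U (n + 2)) := by
      intro n y' hy'
      have hN : closure (T '' U (n + 2)) ∈ 𝓝 (0 : Y) := stepA T hT (hUmem (n + 2))
      have hM : (fun z => y' - z) ⁻¹' closure (T '' U (n + 2)) ∈ 𝓝 y' := by
        have hc : Continuous fun z : Y => y' - z := continuous_const.sub continuous_id
        have := hc.tendsto y'
        simp only [sub_self] at this
        exact this hN
      obtain ⟨z, hz1, hz2⟩ := mem_closure_iff_nhds.1 hy' _ hM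
      obtain ⟨x', hx', rfl⟩ := hz2
      exact ⟨x', hx', hz1⟩
    choose xf hxf1 hxf2 using pick
    let Z : ℕ → Type _ := fun n => {y' : Y // y' ∈ closure (T '' U (n + 1))}
    let seq : ∀ n, Z n := fun n =>
      Nat.rec (⟨y, hy⟩ : Z 0) (fun n p => ⟨p.1 - T (xf n p.1 p.2), hxf2 n p.1 p.2⟩) n
    let x : ℕ → X := fun n => xf n (seq n).1 (seq n).2
    have hxU : ∀ n, x n ∈ U (n + 1) := fun n => hxf1 n (seq n).1 (seq n).2
    have hseq_succ : ∀ n, (seq (n + 1)).1 = (seq n).1 - T (x n) := fun n => rfl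
    have hseq0 : (seq 0).1 = y := rfl
    -- telescoping
    have htel : ∀ n, (seq n).1 = y - T (∑ i ∈ Finset.range n, x i) := by
      intro n
      induction n with
      | zero => simp [hseq0]
      | succ n ih =>
        rw [hseq_succ n, ih, Finset.sum_range_succ, map_add]
        abel
    -- tail sums
    have tailsum : ∀ (j k l : ℕ), l ≤ k + j → ∑ i ∈ Finset.Ico k l, x i ∈ U k := by
      intro j
      induction j with
      | zero =>
        intro k l h
        rw [Finset.Ico_eq_empty (by omega)]
        simpa using hU0 k
      | succ j ih =>
        intro k l h
        rcases le_or_gt l k with hlk | hkl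
        · rw [Finset.Ico_eq_empty (by omega)]
          simpa using hU0 k
        · rw [Finset.sum_eq_sum_Ico_succ_bot hkl]
          exact ((hUadd k) (Set.add_mem_add (hxU k) (ih (k + 1) l (by omega)))).1
    have hsums : ∀ n, ∑ i ∈ Finset.range n, x i ∈ U 0 := by
      intro n
      have := tailsum n 0 n (by omega)
      simpa using this
    -- Cauchy
    have hcs : CauchySeq fun n => ∑ i ∈ Finset.range n, x i := by
      rw [cauchySeq_iff]
      intro Vu hVu
      rw [uniformity_eq_comap_nhds_zero] at hVu
      obtain ⟨Wn, hWn, hWsub⟩ := Filter.mem_comap.1 hVu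
      have hWn' : Wn ∩ -Wn ∈ 𝓝 (0 : X) := by
        refine inter_mem hWn ?_
        have : Continuous fun z : X => -z := continuous_neg
        have h0 := this.tendsto (0 : X)
        simp only [neg_zero] at h0
        exact h0 hWn
      obtain ⟨m, hm⟩ := hb.mem_iff.1 hWn'
      refine ⟨m + 1, fun k hk l hl => ?_⟩
      apply hWsub
      show (∑ i ∈ Finset.range l, x i) - ∑ i ∈ Finset.range k, x i ∈ Wn
      rcases le_total k l with hkl | hlk
      · rw [← Finset.sum_Ico_eq_sub _ hkl]
        have h1 : ∑ i ∈ Finset.Ico k l, x i ∈ U k := tailsum l k l (by omega)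
        have h2 : U k ⊆ b m := by
          obtain ⟨k', rfl⟩ : ∃ k', k = k' + 1 := ⟨k - 1, by omega⟩
          exact (hUb k').trans (hb.antitone (by omega))
        exact (hm (h2 h1)).1
      · have h1 : ∑ i ∈ Finset.Ico l k, x i ∈ U l := tailsum k l k (by omega)
        have h2 : U l ⊆ b m := by
          obtain ⟨l', rfl⟩ : ∃ l', l = l' + 1 := ⟨l - 1, by omega⟩
          exact (hUb l').trans (hb.antitone (by omega))
        have h3 := (hm (h2 h1)).2
        rw [Set.mem_neg] at h3
        rw [← neg_sub, ← Finset.sum_Ico_eq_sub _ hlk]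
        exact h3
    obtain ⟨xlim, hxlim⟩ := cauchySeq_tendsto_of_complete hcs
    -- seq n → 0
    have hy0 : Tendsto (fun n => (seq n).1) atTop (𝓝 (0 : Y)) := by
      rw [Filter.tendsto_def]
      intro s hs
      obtain ⟨W', hW', hW'c, hW's⟩ := exists_mem_nhds_isClosed_subset hs
      have hTW : T ⁻¹' W' ∈ 𝓝 (0 : X) := by
        have h0 := T.continuous.tendsto (0 : X)
        rw [map_zero] at h0
        exact h0 hW'
      obtain ⟨m, hm⟩ := hb.mem_iff.1 hTW
      rw [Filter.mem_atTop_sets]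
      refine ⟨m + 1, fun n hn => ?_⟩
      have hUn : U (n + 1) ⊆ T ⁻¹' W' := (hUb n).trans ((hb.antitone (by omega)).trans hm)
      have h1 : T '' U (n + 1) ⊆ W' := by
        rintro _ ⟨u, hu, rfl⟩; exact hUn hu
      have h2 : closure (T '' U (n + 1)) ⊆ W' := hW'c.closure_subset_iff.2 h1
      exact hW's (h2 (seq n).2)
    -- T xlim = y
    have hTx : Tendsto (fun n => T (∑ i ∈ Finset.range n, x i)) atTop (𝓝 (T xlim)) :=
      (T.continuous.tendsto xlim).comp hxlim
    have hTy : Tendsto (fun n => T (∑ i ∈ Finset.range n, x i)) atTop (𝓝 y) := by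
      have : (fun n => T (∑ i ∈ Finset.range n, x i)) = fun n => y - (seq n).1 := by
        funext n; rw [htel n]; abel
      rw [this]
      have := tendsto_const_nhds.sub hy0 (f := fun _ : ℕ => y)
      simpa using this
    haveI : T2Space Y := by infer_instance
    have hTxy : T xlim = y := tendsto_nhds_unique hTx hTy
    have hxlimU : xlim ∈ U 0 :=
      (hUcl 0).mem_of_tendsto hxlim (Filter.Eventually.of_forall hsums)
    exact ⟨xlim, hxlimU, hTxy⟩
  have h1 : closure (T '' U 1) ∈ 𝓝 (0 : Y) := stepA T hT (hUmem 1)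
  exact Filter.mem_of_superset h1 (main.trans (Set.image_mono hU0V))

theorem omt_isOpenMap [CompleteSpace X] [TopologicalSpace.MetrizableSpace X]
    [CompleteSpace Y] [TopologicalSpace.MetrizableSpace Y]
    (T : X →L[ℝ] Y) (hT : Function.Surjective T) : IsOpenMap T := by
  intro s hs
  rw [isOpen_iff_mem_nhds]
  rintro _ ⟨x, hx, rfl⟩
  have h0 : (fun u => -x + u) '' s ∈ 𝓝 (0 : X) := by
    have := (Homeomorph.addLeft (-x)).isOpenMap.image_mem_nhds (hs.mem_nhds hx)
    simpa using this
  have h1 := key_nhds T hT h0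
  have h2 : (fun v => T x + v) '' (T '' ((fun u => -x + u) '' s)) ∈ 𝓝 (T x + 0) :=
    (Homeomorph.addLeft (T x)).isOpenMap.image_mem_nhds h1
  rw [add_zero] at h2
  refine Filter.mem_of_superset h2 ?_
  rintro _ ⟨_, ⟨_, ⟨u, hu, rfl⟩, rfl⟩, rfl⟩
  refine ⟨u, hu, ?_⟩
  simp

end OMT

/-- A subset `P` of a real topological vector space `X` is a closed polyhedron if there
exist a positive integer `n`, continuous linear functionals `f₁,…,fₙ` on `X`, and reals
`λ₁,…,λₙ` such that `P = {x : fₖ x ≤ λₖ for all k}`. -/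
def IsClosedPolyhedron {X : Type*} [AddCommGroup X] [Module ℝ X] [TopologicalSpace X]
    (P : Set X) : Prop :=
  ∃ n : ℕ, 0 < n ∧ ∃ (f : Fin n → X →L[ℝ] ℝ) (lam : Fin n → ℝ),
    P = {x : X | ∀ k, f k x ≤ lam k}

/-- If `T : X → Y` is a surjective continuous linear map between real Fréchet spaces,
`f₁,…,fₙ` are continuous linear functionals on `X` with `ker T ⊆ ⋂ₖ ker fₖ`, then each
`fₖ` factors as `gₖ ∘ T` for some continuous linear functional `gₖ` on `Y`, for any such
`g` the image of `{x | ∀ k, fₖ x ≤ λₖ}` under `T` is `{y | ∀ k, gₖ y ≤ λₖ}`; in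
particular this image is a closed polyhedron. -/
theorem image_closedPolyhedron_of_ker_le
    {X Y : Type*}
    [AddCommGroup X] [Module ℝ X] [UniformSpace X] [IsUniformAddGroup X]
    [ContinuousSMul ℝ X] [CompleteSpace X] [TopologicalSpace.MetrizableSpace X]
    [AddCommGroup Y] [Module ℝ Y] [UniformSpace Y] [IsUniformAddGroup Y]
    [ContinuousSMul ℝ Y] [CompleteSpace Y] [TopologicalSpace.MetrizableSpace Y]
    (T : X →L[ℝ] Y) (hT : Function.Surjective T)
    (n : ℕ) (hn : 0 < n) (f : Fin n → X →L[ℝ] ℝ) (lam : Fin n → ℝ)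
    (hker : (LinearMap.ker (T : X →ₗ[ℝ] Y) : Set X) ⊆ ⋂ k, (LinearMap.ker (f k : X →ₗ[ℝ] ℝ) : Set X)) :
    (∃ g : Fin n → Y →L[ℝ] ℝ, ∀ k, f k = (g k).comp T) ∧
      (∀ g : Fin n → Y →L[ℝ] ℝ, (∀ k, f k = (g k).comp T) →
        T '' {x : X | ∀ k, f k x ≤ lam k} = {y : Y | ∀ k, g k y ≤ lam k}) ∧
      IsClosedPolyhedron (T '' {x : X | ∀ k, f k x ≤ lam k}) := by
  -- a linear right inverse of T
  obtain ⟨sec, hsec⟩ := (T : X →ₗ[ℝ] Y).exists_rightInverse_of_surjective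
    (LinearMap.range_eq_top.2 hT)
  have hsec' : ∀ y, T (sec y) = y := fun y => LinearMap.ext_iff.1 hsec y
  have hfact : ∀ (k : Fin n) (x : X), f k (sec (T x)) = f k x := by
    intro k x
    have hker' : sec (T x) - x ∈ LinearMap.ker (T : X →ₗ[ℝ] Y) := by
      rw [LinearMap.mem_ker]
      have : T (sec (T x)) = T x := hsec' (T x)
      rw [map_sub]
      simp only [ContinuousLinearMap.coe_coe] at this ⊢
      rw [this, sub_self]
    have hmem := hker hker'
    rw [Set.mem_iInter] at hmem
    have hk := hmem k
    rw [SetLike.mem_coe, LinearMap.mem_ker] at hk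
    have h0 : f k (sec (T x)) - f k x = 0 := by
      rw [← map_sub]; exact hk
    linarith
  have hopen : IsOpenMap T := omt_isOpenMap T hT
  have hgc : ∀ k : Fin n, Continuous fun y => f k (sec y) := by
    intro k
    rw [continuous_def]
    intro U hU
    have himg : (fun y => f k (sec y)) ⁻¹' U = T '' ((f k) ⁻¹' U) := by
      ext y
      constructor
      · intro hy
        exact ⟨sec y, hy, hsec' y⟩
      · rintro ⟨u, hu, rfl⟩
        show f k (sec (T u)) ∈ U
        rw [hfact k u]
        exact hu
    rw [himg]
    exact hopen _ ((f k).continuous.isOpen_preimage U hU)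
  let g : Fin n → Y →L[ℝ] ℝ := fun k =>
    { toLinearMap := (f k).toLinearMap ∘ₗ sec
      cont := hgc k }
  have hg : ∀ k, f k = (g k).comp T := by
    intro k
    ext x
    show f k x = f k (sec (T x))
    rw [hfact k x]
  have himage : ∀ g' : Fin n → Y →L[ℝ] ℝ, (∀ k, f k = (g' k).comp T) →
      T '' {x : X | ∀ k, f k x ≤ lam k} = {y : Y | ∀ k, g' k y ≤ lam k} := by
    intro g' hg'
    ext y
    constructor
    · rintro ⟨x, hx, rfl⟩
      intro k
      have : f k x = g' k (T x) := by rw [hg' k]; rfl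
      rw [← this]
      exact hx k
    · intro hy
      obtain ⟨x, rfl⟩ := hT y
      refine ⟨x, fun k => ?_, rfl⟩
      have : f k x = g' k (T x) := by rw [hg' k]; rfl
      rw [this]
      exact hy k
  exact ⟨⟨g, hg⟩, himage, n, hn, g, lam, himage g hg⟩
end

section
/- Let X be a real vector space, n a positive integer, f₁,…,fₙ linear functionals on X, λ₁,…,λₙ real numbers, and ξ ∈ X a nonzero vector. Set A = {x ∈ X : fₖ(x) ≤ λₖ for all k}, K₊ = {k : fₖ(ξ) > 0}, K₋ = {k : fₖ(ξ) < 0}, K₀ = {k : fₖ(ξ) = 0}, A₁ = {x ∈ X : fᵢ(x) − (fᵢ(ξ)/fⱼ(ξ)) fⱼ(x) ≤ λᵢ − (fᵢ(ξ)/fⱼ(ξ)) λⱼ for all i ∈ K₊ and j ∈ K₋} (with A₁ = X if K₊ or K₋ is empty), and A₂ = {x ∈ X : fₖ(x) ≤ λₖ for all k ∈ K₀} (with A₂ = X if K₀ is empty). Then for every x ∈ A₁ ∩ A₂ there exists t ∈ ℝ with x + tξ ∈ A; consequently A₁ ∩ A₂ = A + ℝξ, and for any linear map T with T(ξ) = 0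 one has T(A₁ ∩ A₂) = T(A). -/
open Pointwise

/-- Let `f₁,…,fₙ` be linear functionals on a real vector space `X`, `λ₁,…,λₙ` reals,
and `ξ ≠ 0`. With `A = {x | ∀ k, fₖ x ≤ λₖ}`,
`A₁ = {x | fᵢ x - (fᵢ ξ / fⱼ ξ) * fⱼ x ≤ λᵢ - (fᵢ ξ / fⱼ ξ) * λⱼ` for all `i` with
`fᵢ ξ > 0` and `j` with `fⱼ ξ < 0}` (so `A₁ = X` when one of these index sets is empty),
and `A₂ = {x | fₖ x ≤ λₖ` for all `k` with `fₖ ξ = 0}` (so `A₂ = X` when this index set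
is empty): every `x ∈ A₁ ∩ A₂` can be translated along `ξ` into `A`; consequently
`A₁ ∩ A₂ = A + ℝξ` and `T (A₁ ∩ A₂) = T A` for every linear map `T` killing `ξ`. -/
theorem inter_eq_add_span_and_image_eq
    {X : Type*} [AddCommGroup X] [Module ℝ X]
    (n : ℕ) (hn : 0 < n) (f : Fin n → X →ₗ[ℝ] ℝ) (lam : Fin n → ℝ)
    (ξ : X) (hξ : ξ ≠ 0)
    (A A₁ A₂ : Set X)
    (hA : A = {x : X | ∀ k, f k x ≤ lam k})
    (hA₁ : A₁ = {x : X | ∀ i j, 0 < f i ξ → f j ξ < 0 →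
        f i x - (f i ξ / f j ξ) * f j x ≤ lam i - (f i ξ / f j ξ) * lam j})
    (hA₂ : A₂ = {x : X | ∀ k, f k ξ = 0 → f k x ≤ lam k}) :
    (∀ x ∈ A₁ ∩ A₂, ∃ t : ℝ, x + t • ξ ∈ A) ∧
      A₁ ∩ A₂ = A + Set.range (fun t : ℝ => t • ξ) ∧
      ∀ (Z : Type*) [AddCommGroup Z] [Module ℝ Z] (T : X →ₗ[ℝ] Z), T ξ = 0 →
        T '' (A₁ ∩ A₂) = T '' A := by
  subst hA hA₁ hA₂
  -- main translation claim
  have hmain : ∀ x ∈ ({x : X | ∀ i j, 0 < f i ξ → f j ξ < 0 →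
        f i x - (f i ξ / f j ξ) * f j x ≤ lam i - (f i ξ / f j ξ) * lam j} ∩
        {x : X | ∀ k, f k ξ = 0 → f k x ≤ lam k}),
      ∃ t : ℝ, x + t • ξ ∈ {x : X | ∀ k, f k x ≤ lam k} := by
    intro x hx
    set g : Fin n → ℝ := fun k => (lam k - f k x) / (f k ξ) with hg
    have hij : ∀ i j, 0 < f i ξ → f j ξ < 0 → g j ≤ g i := by
      intro i j hi hj
      have h := hx.1 i j hi hj
      have hjne : f j ξ ≠ 0 := ne_of_lt hj
      have e1 : g j * f j ξ = lam j - f j x := div_mul_cancel₀ _ hjne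
      have e2 : g i * f i ξ = lam i - f i x := div_mul_cancel₀ _ (ne_of_gt hi)
      have e3 : (f i ξ / f j ξ) * f j ξ = f i ξ := div_mul_cancel₀ _ hjne
      have h4 : g j * f i ξ ≤ g i * f i ξ := by
        rw [e2]
        have hrw : g j * f i ξ = (f i ξ / f j ξ) * (lam j - f j x) := by
          simp only [hg]; field_simp
        rw [hrw]
        linarith
      exact le_of_mul_le_mul_right h4 hi
    set Sp : Finset (Fin n) := Finset.univ.filter (fun k => 0 < f k ξ) with hSp
    set Sm : Finset (Fin n) := Finset.univ.filter (fun k => f k ξ < 0) with hSm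
    by_cases hp : Sp.Nonempty
    · refine ⟨Sp.inf' hp g, ?_⟩
      intro k
      simp only [map_add, map_smul, smul_eq_mul, Set.mem_setOf_eq]
      rcases lt_trichotomy (f k ξ) 0 with hk | hk | hk
      · have hle : g k ≤ Sp.inf' hp g := by
          apply Finset.le_inf'
          intro i hi
          exact hij i k (by simpa [hSp] using hi) hk
        nlinarith [div_mul_cancel₀ (lam k - f k x) (ne_of_lt hk),
          mul_le_mul_of_nonpos_right hle (le_of_lt hk)]
      · have := hx.2 k hk
        simp [hk]; linarith
      · have hle : Sp.inf' hp g ≤ g k :=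
          Finset.inf'_le _ (by simp [hSp, hk])
        nlinarith [div_mul_cancel₀ (lam k - f k x) (ne_of_gt hk),
          mul_le_mul_of_nonneg_right hle (le_of_lt hk)]
    · by_cases hm : Sm.Nonempty
      · refine ⟨Sm.sup' hm g, ?_⟩
        intro k
        simp only [map_add, map_smul, smul_eq_mul, Set.mem_setOf_eq]
        rcases lt_trichotomy (f k ξ) 0 with hk | hk | hk
        · have hle : g k ≤ Sm.sup' hm g :=
            Finset.le_sup' _ (by simp [hSm, hk])
          nlinarith [div_mul_cancel₀ (lam k - f k x) (ne_of_lt hk),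
            mul_le_mul_of_nonpos_right hle (le_of_lt hk)]
        · have := hx.2 k hk
          simp [hk]; linarith
        · exact absurd ⟨k, by simp [hSp, hk]⟩ hp
      · refine ⟨0, ?_⟩
        intro k
        simp only [map_add, map_smul, smul_eq_mul, Set.mem_setOf_eq, zero_mul, add_zero]
        rcases lt_trichotomy (f k ξ) 0 with hk | hk | hk
        · exact absurd ⟨k, by simp [hSm, hk]⟩ hm
        · exact hx.2 k hk
        · exact absurd ⟨k, by simp [hSp, hk]⟩ hp
  -- shifting along ξ stays in A₁ ∩ A₂
  have hshift : ∀ a ∈ ({x : X | ∀ k, f k x ≤ lam k}), ∀ t : ℝ,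
      a + t • ξ ∈ ({x : X | ∀ i j, 0 < f i ξ → f j ξ < 0 →
        f i x - (f i ξ / f j ξ) * f j x ≤ lam i - (f i ξ / f j ξ) * lam j} ∩
        {x : X | ∀ k, f k ξ = 0 → f k x ≤ lam k}) := by
    intro a ha t
    constructor
    · intro i j hi hj
      simp only [map_add, map_smul, smul_eq_mul, Set.mem_setOf_eq]
      have hjne : f j ξ ≠ 0 := ne_of_lt hj
      have e3 : (f i ξ / f j ξ) * f j ξ = f i ξ := div_mul_cancel₀ _ hjne
      have hcneg : f i ξ / f j ξ < 0 := div_neg_of_pos_of_neg hi hj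
      have h1 := ha i
      have h2 := ha j
      have e4 : (f i ξ / f j ξ) * (t * f j ξ) = t * f i ξ := by
        rw [mul_comm t, ← mul_assoc, e3, mul_comm]
      nlinarith [mul_le_mul_of_nonpos_left h2 (le_of_lt hcneg), e4]
    · intro k hk
      simp only [map_add, map_smul, smul_eq_mul, Set.mem_setOf_eq, hk, mul_zero, add_zero]
      exact ha k
  refine ⟨hmain, ?_, ?_⟩
  · apply Set.Subset.antisymm
    · intro x hx
      obtain ⟨t, ht⟩ := hmain x hx
      refine Set.mem_add.mpr ⟨x + t • ξ, ht, (-t) • ξ, ⟨-t, rfl⟩, ?_⟩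
      rw [add_assoc, ← add_smul]
      simp
    · rintro z hz
      obtain ⟨a, ha, y, ⟨t, rfl⟩, rfl⟩ := Set.mem_add.mp hz
      exact hshift a ha t
  · intro Z _ _ T hT
    apply Set.Subset.antisymm
    · rintro z ⟨x, hx, rfl⟩
      obtain ⟨t, ht⟩ := hmain x hx
      exact ⟨x + t • ξ, ht, by simp [map_add, map_smul, hT]⟩
    · rintro z ⟨a, ha, rfl⟩
      refine ⟨a, ?_, rfl⟩
      have := hshift a ha 0
      simpa using this
end
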